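/- arXiv:1303.3135 — 6 statements merged into one kernel-verified Lean document; each statement's English description precedes it below -/
import Mathlib

section
/- For all r > 1, α > 0, and x ∈ ℝ, one has ∫_ℝ (1+|y|)^{-r} (1+α|x−y|)^{-r} dy ≤ C ( α^{-1}(1+|x|)^{-r} + (1+α|x|)^{-r} ), with a constant C depending only on r. -/
open MeasureTheory

/-- Pointwise key estimate: one of the two factors dominates. -/
lemma convolution_decay_pointwise (r : ℝ) (hr : 1 < r) (α : ℝ) (hα : 0 < α)
    (x y : ℝ) :
    (1 + |y|) ^ (-r) * (1 + α * |x - y|) ^ (-r) ≤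
      (2 : ℝ) ^ r * ((1 + α * |x|) ^ (-r) * (1 + |y|) ^ (-r)
        + (1 + |x|) ^ (-r) * (1 + α * |x - y|) ^ (-r)) := by
  have hyabs : (0 : ℝ) ≤ |y| := abs_nonneg y
  have hxabs : (0 : ℝ) ≤ |x| := abs_nonneg x
  have hxy : (0 : ℝ) ≤ |x - y| := abs_nonneg _
  have ha : (0 : ℝ) < 1 + |y| := by linarith
  have hb : (0 : ℝ) < 1 + α * |x - y| := by positivity
  have hA : (0 : ℝ) < 1 + α * |x| := by positivity
  have hB : (0 : ℝ) < 1 + |x| := by linarith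
  have h2r : (0 : ℝ) < (2 : ℝ) ^ r := Real.rpow_pos_of_pos (by norm_num) r
  have hanr : (0 : ℝ) ≤ (1 + |y|) ^ (-r) := (Real.rpow_pos_of_pos ha _).le
  have hbnr : (0 : ℝ) ≤ (1 + α * |x - y|) ^ (-r) := (Real.rpow_pos_of_pos hb _).le
  have hAnr : (0 : ℝ) ≤ (1 + α * |x|) ^ (-r) := (Real.rpow_pos_of_pos hA _).le
  have hBnr : (0 : ℝ) ≤ (1 + |x|) ^ (-r) := (Real.rpow_pos_of_pos hB _).le
  -- helper : if  s/2 ≤ t  with 0 < s then t^(-r) ≤ 2^r * s^(-r)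
  have half : ∀ s t : ℝ, 0 < s → 0 < t → s / 2 ≤ t → t ^ (-r) ≤ 2 ^ r * s ^ (-r) := by
    intro s t hs ht hst
    have h1 : t ^ (-r) ≤ (s / 2) ^ (-r) :=
      Real.rpow_le_rpow_of_nonpos (by positivity) hst (by linarith)
    have h2 : (s / 2) ^ (-r) = 2 ^ r * s ^ (-r) := by
      rw [Real.div_rpow hs.le (by norm_num), Real.rpow_neg (by norm_num : (0:ℝ) ≤ 2),
        div_eq_mul_inv, inv_inv, mul_comm]
    linarith [h1, h2.symm.le]
  rcases le_or_gt (|x| / 2) |x - y| with hc | hc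
  · -- then 1 + α|x-y| ≥ (1 + α|x|)/2
    have hstep : (1 + α * |x|) / 2 ≤ 1 + α * |x - y| := by
      have : α * |x| / 2 ≤ α * |x - y| := by
        rw [div_le_iff₀ (by norm_num : (0:ℝ) < 2)] at hc ⊢
        nlinarith
      linarith
    have hb2 : (1 + α * |x - y|) ^ (-r) ≤ 2 ^ r * (1 + α * |x|) ^ (-r) :=
      half _ _ hA hb hstep
    have : (1 + |y|) ^ (-r) * (1 + α * |x - y|) ^ (-r)
        ≤ (1 + |y|) ^ (-r) * (2 ^ r * (1 + α * |x|) ^ (-r)) :=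
      mul_le_mul_of_nonneg_left hb2 hanr
    nlinarith [mul_nonneg hBnr hbnr]
  · -- otherwise |y| ≥ |x|/2
    have hy2 : |x| / 2 ≤ |y| := by
      have htri := abs_sub_abs_le_abs_sub x y
      linarith
    have hstep : (1 + |x|) / 2 ≤ 1 + |y| := by linarith
    have ha2 : (1 + |y|) ^ (-r) ≤ 2 ^ r * (1 + |x|) ^ (-r) := half _ _ hB ha hstep
    have : (1 + |y|) ^ (-r) * (1 + α * |x - y|) ^ (-r)
        ≤ (2 ^ r * (1 + |x|) ^ (-r)) * (1 + α * |x - y|) ^ (-r) :=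
      mul_le_mul_of_nonneg_right ha2 hbnr
    nlinarith [mul_nonneg hAnr hanr]

/-- The convolution-type estimate: for `r > 1` there is a constant `C` (depending only
on `r`) such that for all `α > 0` and `x ∈ ℝ`,
`∫_ℝ (1+|y|)^{-r} (1+α|x−y|)^{-r} dy ≤ C (α⁻¹(1+|x|)^{-r} + (1+α|x|)^{-r})`. -/
theorem convolution_decay_estimate (r : ℝ) (hr : 1 < r) :
    ∃ C > 0, ∀ α : ℝ, 0 < α → ∀ x : ℝ,
      ∫⁻ y : ℝ, ENNReal.ofReal ((1 + |y|) ^ (-r) * (1 + α * |x - y|) ^ (-r))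
        ≤ ENNReal.ofReal (C * (α⁻¹ * (1 + |x|) ^ (-r) + (1 + α * |x|) ^ (-r))) := by
  have hg : Integrable (fun y : ℝ => (1 + |y|) ^ (-r)) := by
    have h := integrable_one_add_norm (E := ℝ) (μ := volume) (r := r) (by simpa using hr)
    simpa [Real.norm_eq_abs] using h
  set I := ∫ y : ℝ, (1 + |y|) ^ (-r) with hIdef
  have hgnn : ∀ y : ℝ, 0 ≤ (1 + |y|) ^ (-r) := fun y =>
    (Real.rpow_pos_of_pos (by positivity) _).le
  have hInn : 0 ≤ I := integral_nonneg hgnn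
  have h2r : (0 : ℝ) < (2 : ℝ) ^ r := Real.rpow_pos_of_pos (by norm_num) r
  refine ⟨(2 : ℝ) ^ r * (I + 1), by positivity, fun α hα x => ?_⟩
  -- integrability of the translated/scaled factor
  have hf : Integrable (fun y : ℝ => (1 + α * |x - y|) ^ (-r)) := by
    have h1 : Integrable (fun t : ℝ => (1 + |α * t|) ^ (-r)) :=
      hg.comp_mul_left' hα.ne'
    have h2 : Integrable (fun y : ℝ => (1 + |α * (x - y)|) ^ (-r)) :=
      h1.comp_sub_left x
    refine h2.congr (Filter.Eventually.of_forall fun y => ?_)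
    simp only [abs_mul, abs_of_pos hα]
  -- value of its integral
  have hfI : (∫ y : ℝ, (1 + α * |x - y|) ^ (-r)) = α⁻¹ * I := by
    have h1 : (∫ y : ℝ, (1 + α * |x - y|) ^ (-r))
        = ∫ y : ℝ, (1 + |α * (x - y)|) ^ (-r) := by
      congr 1; ext y; rw [abs_mul, abs_of_pos hα]
    rw [h1, integral_sub_left_eq_self (fun t : ℝ => (1 + |α * t|) ^ (-r)) volume x]
    have h2 := MeasureTheory.Measure.integral_comp_mul_left
      (fun t : ℝ => (1 + |t|) ^ (-r)) α
    simpa [smul_eq_mul, abs_of_pos, hα, abs_of_pos (inv_pos.mpr hα)] using h2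
  -- the dominating integrable function
  set F : ℝ → ℝ := fun y => (2 : ℝ) ^ r * ((1 + α * |x|) ^ (-r) * (1 + |y|) ^ (-r)
    + (1 + |x|) ^ (-r) * (1 + α * |x - y|) ^ (-r)) with hFdef
  have hFint : Integrable F := by
    exact (((hg.const_mul _).add (hf.const_mul _)).const_mul _)
  have hFnn : ∀ y, 0 ≤ F y := by
    intro y
    have h1 : (0:ℝ) ≤ (1 + α * |x|) ^ (-r) := Real.rpow_nonneg (by positivity) _
    have h2 : (0:ℝ) ≤ (1 + |y|) ^ (-r) := Real.rpow_nonneg (by positivity) _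
    have h3 : (0:ℝ) ≤ (1 + |x|) ^ (-r) := Real.rpow_nonneg (by positivity) _
    have h4 : (0:ℝ) ≤ (1 + α * |x - y|) ^ (-r) := Real.rpow_nonneg (by positivity) _
    positivity
  calc ∫⁻ y : ℝ, ENNReal.ofReal ((1 + |y|) ^ (-r) * (1 + α * |x - y|) ^ (-r))
      ≤ ∫⁻ y : ℝ, ENNReal.ofReal (F y) := by
        refine lintegral_mono fun y => ENNReal.ofReal_le_ofReal ?_
        exact convolution_decay_pointwise r hr α hα x y
    _ = ENNReal.ofReal (∫ y : ℝ, F y) := by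
        rw [← ofReal_integral_eq_lintegral_ofReal hFint
          (Filter.Eventually.of_forall hFnn)]
    _ ≤ ENNReal.ofReal ((2 : ℝ) ^ r * (I + 1)
          * (α⁻¹ * (1 + |x|) ^ (-r) + (1 + α * |x|) ^ (-r))) := by
        refine ENNReal.ofReal_le_ofReal ?_
        have hFI : (∫ y : ℝ, F y)
            = (2 : ℝ) ^ r * ((1 + α * |x|) ^ (-r) * I
              + (1 + |x|) ^ (-r) * (α⁻¹ * I)) := by
          rw [hFdef]
          rw [integral_const_mul]
          rw [integral_add (hg.const_mul _) (hf.const_mul _),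
            integral_const_mul, integral_const_mul, hfI]
        rw [hFI]
        have h1 : (0:ℝ) ≤ (1 + α * |x|) ^ (-r) := Real.rpow_nonneg (by positivity) _
        have h3 : (0:ℝ) ≤ (1 + |x|) ^ (-r) := Real.rpow_nonneg (by positivity) _
        have hα' : (0:ℝ) ≤ α⁻¹ := (inv_pos.mpr hα).le
        nlinarith [mul_nonneg hα' h3, mul_nonneg (mul_nonneg hα' h3) hInn,
          mul_nonneg h1 hInn]
end

section
/- Let A(ξ) = min(|ξ|, 1/(1+|ξ|)) on ℝ^d and ℓ > d a positive integer. Then there is a constant C > 0 such that for every r > 0, ∫_{ℝ^d} A(ξ)^ℓ A(rξ)^ℓ dξ ≤ C · min(r^{ℓ−d}, r^{d−ℓ}). -/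
open MeasureTheory


open MeasureTheory Module Set Metric
open scoped ENNReal

noncomputable section SimPhi

variable {d : ℕ}

private def Ag (ξ : EuclideanSpace ℝ (Fin d)) : ℝ := min ‖ξ‖ (1 / (1 + ‖ξ‖))

private lemma Ag_nonneg (ξ : EuclideanSpace ℝ (Fin d)) : 0 ≤ Ag ξ :=
  le_min (norm_nonneg _) (by positivity)

private lemma Ag_le_one (ξ : EuclideanSpace ℝ (Fin d)) : Ag ξ ≤ 1 := by
  refine (min_le_right _ _).trans ?_
  rw [div_le_one (by positivity)]
  linarith [norm_nonneg ξ]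

private lemma Ag_le_norm (ξ : EuclideanSpace ℝ (Fin d)) : Ag ξ ≤ ‖ξ‖ := min_le_left _ _

private lemma Ag_le_inv (ξ : EuclideanSpace ℝ (Fin d)) (h : 0 < ‖ξ‖) : Ag ξ ≤ ‖ξ‖⁻¹ := by
  refine (min_le_right _ _).trans ?_
  rw [one_div]
  exact inv_anti₀ h (by linarith)

private lemma Ag_continuous : Continuous (Ag (d := d)) :=
  continuous_norm.min (continuous_const.div (continuous_const.add continuous_norm)
    (fun x => by positivity))

/-- Change of variables under scaling for lower Lebesgue integrals. -/
private lemma lint_comp_smul (f : EuclideanSpace ℝ (Fin d) → ℝ≥0∞) (hf : Measurable f)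
    {c : ℝ} (hc : c ≠ 0) :
    ∫⁻ x, f (c • x) = ENNReal.ofReal |(c ^ d : ℝ)|⁻¹ * ∫⁻ x, f x := by
  rw [← lintegral_map hf (measurable_const_smul c), Measure.map_addHaar_smul volume hc,
    lintegral_smul_measure, finrank_euclideanSpace_fin, abs_inv, smul_eq_mul]

end SimPhi

noncomputable section SimPhi2
open ENNReal in
private lemma tail_meas (R : ℝ) : MeasurableSet {x : EuclideanSpace ℝ (Fin d) | R < ‖x‖} :=
  (isOpen_lt continuous_const continuous_norm).measurableSet

variable {d : ℕ}

private lemma meas_aux (p c : ℝ) :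
    Measurable (fun x : EuclideanSpace ℝ (Fin d) => ENNReal.ofReal (c * ‖x‖ ^ (-p))) :=
  ((measurable_norm.pow measurable_const).const_mul c).ennreal_ofReal

private lemma tail_eq (p : ℝ) {R : ℝ} (hR : 0 < R) :
    ∫⁻ x : EuclideanSpace ℝ (Fin d) in {x | R < ‖x‖}, ENNReal.ofReal (‖x‖ ^ (-p)) =
      ENNReal.ofReal (R ^ ((d : ℝ) - p)) *
        ∫⁻ x : EuclideanSpace ℝ (Fin d) in {x | 1 < ‖x‖}, ENNReal.ofReal (‖x‖ ^ (-p)) := by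
  set g : EuclideanSpace ℝ (Fin d) → ℝ≥0∞ :=
    Set.indicator {y | 1 < ‖y‖} (fun y => ENNReal.ofReal (R ^ (-p) * ‖y‖ ^ (-p))) with hg_def
  have hg : Measurable g := (meas_aux p _).indicator (tail_meas 1)
  have hRp : (0:ℝ) < R ^ (-p) := Real.rpow_pos_of_pos hR _
  have key : ∀ x : EuclideanSpace ℝ (Fin d),
      Set.indicator {y : EuclideanSpace ℝ (Fin d) | R < ‖y‖}
        (fun y => ENNReal.ofReal (‖y‖ ^ (-p))) x = g (R⁻¹ • x) := by
    intro x
    have hns : ‖R⁻¹ • x‖ = R⁻¹ * ‖x‖ := by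
      rw [norm_smul, Real.norm_eq_abs, abs_of_pos (inv_pos.2 hR)]
    by_cases hx : R < ‖x‖
    · have h1 : (1:ℝ) < ‖R⁻¹ • x‖ := by
        rw [hns]
        have := mul_lt_mul_of_pos_left hx (inv_pos.2 hR)
        rwa [inv_mul_cancel₀ hR.ne'] at this
      rw [Set.indicator_of_mem (show x ∈ {y : EuclideanSpace ℝ (Fin d) | R < ‖y‖} from hx),
        hg_def, Set.indicator_of_mem (show R⁻¹ • x ∈ {y : EuclideanSpace ℝ (Fin d) | 1 < ‖y‖} from h1)]
      congr 1
      rw [hns, Real.mul_rpow (inv_nonneg.2 hR.le) (norm_nonneg x),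
        Real.inv_rpow hR.le, ← mul_assoc, mul_inv_cancel₀ (ne_of_gt hRp), one_mul]
    · have h1 : ¬ (1:ℝ) < ‖R⁻¹ • x‖ := by
        rw [hns]
        push_neg at hx ⊢
        calc R⁻¹ * ‖x‖ ≤ R⁻¹ * R := by
              exact mul_le_mul_of_nonneg_left hx (inv_pos.2 hR).le
          _ = 1 := inv_mul_cancel₀ hR.ne'
      rw [Set.indicator_of_notMem (show x ∉ {y : EuclideanSpace ℝ (Fin d) | R < ‖y‖} from hx),
        hg_def, Set.indicator_of_notMem (show R⁻¹ • x ∉ {y : EuclideanSpace ℝ (Fin d) | 1 < ‖y‖} from h1)]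
  calc ∫⁻ x : EuclideanSpace ℝ (Fin d) in {x | R < ‖x‖}, ENNReal.ofReal (‖x‖ ^ (-p))
      = ∫⁻ x, Set.indicator {y : EuclideanSpace ℝ (Fin d) | R < ‖y‖}
          (fun y => ENNReal.ofReal (‖y‖ ^ (-p))) x := (lintegral_indicator (tail_meas R) _).symm
    _ = ∫⁻ x, g (R⁻¹ • x) := lintegral_congr key
    _ = ENNReal.ofReal |((R⁻¹) ^ d : ℝ)|⁻¹ * ∫⁻ x, g x :=
        lint_comp_smul g hg (inv_ne_zero hR.ne')
    _ = ENNReal.ofReal (R ^ (d:ℕ)) * (ENNReal.ofReal (R ^ (-p)) *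
          ∫⁻ x : EuclideanSpace ℝ (Fin d) in {x | 1 < ‖x‖}, ENNReal.ofReal (‖x‖ ^ (-p))) := by
        rw [hg_def, lintegral_indicator (tail_meas 1)]
        simp_rw [ENNReal.ofReal_mul hRp.le]
        rw [lintegral_const_mul _ (measurable_norm.pow measurable_const).ennreal_ofReal]
        congr 2
        rw [inv_pow, abs_inv, inv_inv, abs_of_pos (pow_pos hR d)]
    _ = ENNReal.ofReal (R ^ ((d:ℝ) - p)) *
          ∫⁻ x : EuclideanSpace ℝ (Fin d) in {x | 1 < ‖x‖}, ENNReal.ofReal (‖x‖ ^ (-p)) := by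
        rw [← mul_assoc, ← ENNReal.ofReal_mul (by positivity), ← Real.rpow_natCast R d,
          ← Real.rpow_add hR, sub_eq_add_neg]

private lemma tail_lt_top {p : ℝ} (hp : (d:ℝ) < p) :
    ∫⁻ x : EuclideanSpace ℝ (Fin d) in {x | 1 < ‖x‖}, ENNReal.ofReal (‖x‖ ^ (-p)) < ⊤ := by
  have hp0 : (0:ℝ) < p := lt_of_le_of_lt (Nat.cast_nonneg d) hp
  calc ∫⁻ x : EuclideanSpace ℝ (Fin d) in {x | 1 < ‖x‖}, ENNReal.ofReal (‖x‖ ^ (-p))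
      ≤ ∫⁻ x : EuclideanSpace ℝ (Fin d) in {x | 1 < ‖x‖},
          ENNReal.ofReal (2 ^ p * (1 + ‖x‖) ^ (-p)) := by
        refine setLIntegral_mono ((((measurable_norm.const_add 1).pow measurable_const).const_mul _).ennreal_ofReal) ?_
        intro x hx
        have hx1 : (1:ℝ) < ‖x‖ := hx
        refine ENNReal.ofReal_le_ofReal ?_
        have h1 : (1:ℝ) + ‖x‖ ≤ 2 * ‖x‖ := by linarith
        calc ‖x‖ ^ (-p) = 2 ^ p * (2 * ‖x‖) ^ (-p) := by
              rw [Real.mul_rpow (by norm_num) (norm_nonneg x), ← mul_assoc,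
                ← Real.rpow_add two_pos, add_neg_cancel, Real.rpow_zero, one_mul]
          _ ≤ 2 ^ p * (1 + ‖x‖) ^ (-p) := by
              have := Real.rpow_le_rpow_of_nonpos (by positivity : (0:ℝ) < 1 + ‖x‖) h1
                (neg_nonpos.2 hp0.le)
              exact mul_le_mul_of_nonneg_left this (by positivity)
    _ ≤ ∫⁻ x : EuclideanSpace ℝ (Fin d), ENNReal.ofReal (2 ^ p * (1 + ‖x‖) ^ (-p)) :=
        setLIntegral_le_lintegral _ _
    _ = ENNReal.ofReal (2 ^ p) * ∫⁻ x : EuclideanSpace ℝ (Fin d),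
          ENNReal.ofReal ((1 + ‖x‖) ^ (-p)) := by
        simp_rw [ENNReal.ofReal_mul (by positivity : (0:ℝ) ≤ 2 ^ p)]
        exact lintegral_const_mul _ ((measurable_norm.const_add 1).pow measurable_const).ennreal_ofReal
    _ < ⊤ := ENNReal.mul_lt_top ENNReal.ofReal_lt_top
        (finite_integral_one_add_norm (by rwa [finrank_euclideanSpace_fin]))

end SimPhi2

noncomputable section SimPhi3
variable {d : ℕ}

private lemma key_small (d ℓ : ℕ) (hℓ : d < ℓ) :
    ∃ C > 0, ∀ r : ℝ, 0 < r → r ≤ 1 →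
      ∫⁻ ξ : EuclideanSpace ℝ (Fin d), ENNReal.ofReal (Ag ξ ^ ℓ * Ag (r • ξ) ^ ℓ)
        ≤ ENNReal.ofReal (C * r ^ ((ℓ : ℝ) - d)) := by
  have hdl : (d : ℝ) < ℓ := Nat.cast_lt.2 hℓ
  have hl0 : 0 ≤ (ℓ : ℝ) := Nat.cast_nonneg ℓ
  set p : ℝ := ((2 * ℓ : ℕ) : ℝ) with hp
  have hdp : (d : ℝ) < p := by rw [hp]; exact_mod_cast (by omega : d < 2 * ℓ)
  set T : ℝ≥0∞ := ∫⁻ x : EuclideanSpace ℝ (Fin d) in {x | 1 < ‖x‖},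
    ENNReal.ofReal (‖x‖ ^ (-p)) with hT_def
  have hT : T < ⊤ := tail_lt_top hdp
  set Tr : ℝ := T.toReal with hTr_def
  have hTr : 0 ≤ Tr := ENNReal.toReal_nonneg
  have hTofReal : T = ENNReal.ofReal Tr := (ENNReal.ofReal_toReal hT.ne).symm
  set κ : ℝ≥0∞ := volume (Metric.closedBall (0 : EuclideanSpace ℝ (Fin d)) 1) with hκ_def
  have hκ : κ ≠ ⊤ := measure_closedBall_lt_top.ne
  set K : ℝ := κ.toReal with hK_def
  have hK : 0 ≤ K := ENNReal.toReal_nonneg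
  have hκK : κ = ENNReal.ofReal K := (ENNReal.ofReal_toReal hκ).symm
  refine ⟨2 * K + Tr + 1, by linarith, fun r hr hr1 => ?_⟩
  have hnorm : ∀ ξ : EuclideanSpace ℝ (Fin d), ‖r • ξ‖ = r * ‖ξ‖ := fun ξ => by
    rw [norm_smul, Real.norm_eq_abs, abs_of_pos hr]
  have hrpow_le : r ^ ℓ ≤ r ^ ((ℓ : ℝ) - d) := by
    calc r ^ ℓ = r ^ ((ℓ : ℝ)) := (Real.rpow_natCast r ℓ).symm
      _ ≤ r ^ ((ℓ : ℝ) - d) := Real.rpow_le_rpow_of_exponent_ge hr hr1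
          (by have : (0:ℝ) ≤ d := Nat.cast_nonneg d; linarith)
  set s₁ : Set (EuclideanSpace ℝ (Fin d)) := Metric.closedBall 0 1 with hs₁
  set s₂ : Set (EuclideanSpace ℝ (Fin d)) := Metric.closedBall 0 (1/r) \ Metric.closedBall 0 1
    with hs₂
  set s₃ : Set (EuclideanSpace ℝ (Fin d)) := {x | 1/r < ‖x‖} with hs₃
  have hcover : (Set.univ : Set (EuclideanSpace ℝ (Fin d))) ⊆ s₁ ∪ s₂ ∪ s₃ := by
    intro x _
    by_cases h1 : ‖x‖ ≤ 1
    · exact Or.inl (Or.inl (mem_closedBall_zero_iff.2 h1))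
    · by_cases h2 : ‖x‖ ≤ 1/r
      · exact Or.inl (Or.inr ⟨mem_closedBall_zero_iff.2 h2, fun hc =>
          h1 (mem_closedBall_zero_iff.1 hc)⟩)
      · exact Or.inr (by simpa [hs₃] using lt_of_not_ge h2)
  -- region 1
  have ht1 : ∫⁻ ξ in s₁, ENNReal.ofReal (Ag ξ ^ ℓ * Ag (r • ξ) ^ ℓ)
      ≤ ENNReal.ofReal (K * r ^ ((ℓ : ℝ) - d)) := by
    calc ∫⁻ ξ in s₁, ENNReal.ofReal (Ag ξ ^ ℓ * Ag (r • ξ) ^ ℓ)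
        ≤ ∫⁻ _ in s₁, ENNReal.ofReal (r ^ ℓ) := by
          refine setLIntegral_mono measurable_const fun ξ hξ => ?_
          have hξ1 : ‖ξ‖ ≤ 1 := mem_closedBall_zero_iff.1 hξ
          refine ENNReal.ofReal_le_ofReal ?_
          have h1 : Ag ξ ^ ℓ ≤ 1 := pow_le_one₀ (Ag_nonneg _) (Ag_le_one _)
          have h2 : Ag (r • ξ) ^ ℓ ≤ r ^ ℓ := by
            refine pow_le_pow_left₀ (Ag_nonneg _) ?_ ℓ
            calc Ag (r • ξ) ≤ ‖r • ξ‖ := Ag_le_norm _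
              _ = r * ‖ξ‖ := hnorm ξ
              _ ≤ r * 1 := by nlinarith
              _ = r := mul_one r
          calc Ag ξ ^ ℓ * Ag (r • ξ) ^ ℓ ≤ 1 * (r ^ ℓ) :=
                mul_le_mul h1 h2 (pow_nonneg (Ag_nonneg _) ℓ) one_pos.le
            _ = r ^ ℓ := one_mul _
      _ = ENNReal.ofReal (r ^ ℓ) * κ := by rw [setLIntegral_const, hκ_def]
      _ = ENNReal.ofReal (r ^ ℓ * K) := by rw [hκK, ← ENNReal.ofReal_mul (by positivity)]
      _ ≤ ENNReal.ofReal (K * r ^ ((ℓ : ℝ) - d)) := by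
          refine ENNReal.ofReal_le_ofReal ?_
          rw [mul_comm]
          exact mul_le_mul_of_nonneg_left hrpow_le hK
  -- region 2
  have ht2 : ∫⁻ ξ in s₂, ENNReal.ofReal (Ag ξ ^ ℓ * Ag (r • ξ) ^ ℓ)
      ≤ ENNReal.ofReal (K * r ^ ((ℓ : ℝ) - d)) := by
    calc ∫⁻ ξ in s₂, ENNReal.ofReal (Ag ξ ^ ℓ * Ag (r • ξ) ^ ℓ)
        ≤ ∫⁻ _ in s₂, ENNReal.ofReal (r ^ ℓ) := by
          refine setLIntegral_mono measurable_const fun ξ hξ => ?_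
          obtain ⟨hin, hout⟩ := hξ
          have hle : ‖ξ‖ ≤ 1/r := mem_closedBall_zero_iff.1 hin
          have hgt : 1 < ‖ξ‖ := lt_of_not_ge fun hc => hout (mem_closedBall_zero_iff.2 hc)
          have hξ0 : 0 < ‖ξ‖ := lt_trans one_pos hgt
          refine ENNReal.ofReal_le_ofReal ?_
          calc Ag ξ ^ ℓ * Ag (r • ξ) ^ ℓ = (Ag ξ * Ag (r • ξ)) ^ ℓ := (mul_pow _ _ _).symm
            _ ≤ (‖ξ‖⁻¹ * (r * ‖ξ‖)) ^ ℓ := by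
                refine pow_le_pow_left₀ (mul_nonneg (Ag_nonneg _) (Ag_nonneg _)) ?_ ℓ
                refine mul_le_mul (Ag_le_inv ξ hξ0) ?_ (Ag_nonneg _) (by positivity)
                calc Ag (r • ξ) ≤ ‖r • ξ‖ := Ag_le_norm _
                  _ = r * ‖ξ‖ := hnorm ξ
            _ = r ^ ℓ := by rw [show ‖ξ‖⁻¹ * (r * ‖ξ‖) = r by field_simp]
      _ = ENNReal.ofReal (r ^ ℓ) * volume s₂ := setLIntegral_const _ _
      _ ≤ ENNReal.ofReal (r ^ ℓ) *
            volume (Metric.closedBall (0 : EuclideanSpace ℝ (Fin d)) (1/r)) :=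
          mul_le_mul_right (measure_mono Set.diff_subset) _
      _ = ENNReal.ofReal (r ^ ℓ) * (ENNReal.ofReal ((1/r) ^ d) * κ) := by
          rw [Measure.addHaar_closedBall' volume _ (by positivity), finrank_euclideanSpace_fin,
            hκ_def]
      _ = ENNReal.ofReal (r ^ ℓ * ((1/r) ^ d * K)) := by
          rw [hκK, ← ENNReal.ofReal_mul (by positivity), ← ENNReal.ofReal_mul (by positivity)]
      _ ≤ ENNReal.ofReal (K * r ^ ((ℓ : ℝ) - d)) := by
          refine ENNReal.ofReal_le_ofReal (le_of_eq ?_)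
          have h2 : (1/r) ^ d = r ^ (-(d:ℝ)) := by
            rw [Real.rpow_neg hr.le, Real.rpow_natCast, one_div, inv_pow]
          have h1 : r ^ ℓ = r ^ ((ℓ:ℝ)) := (Real.rpow_natCast r ℓ).symm
          rw [h1, h2, show (ℓ:ℝ) - d = (ℓ:ℝ) + -(d:ℝ) by ring, Real.rpow_add hr]
          ring
  -- region 3
  have ht3 : ∫⁻ ξ in s₃, ENNReal.ofReal (Ag ξ ^ ℓ * Ag (r • ξ) ^ ℓ)
      ≤ ENNReal.ofReal (Tr * r ^ ((ℓ : ℝ) - d)) := by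
    calc ∫⁻ ξ in s₃, ENNReal.ofReal (Ag ξ ^ ℓ * Ag (r • ξ) ^ ℓ)
        ≤ ∫⁻ ξ in s₃, ENNReal.ofReal ((r⁻¹) ^ ℓ * ‖ξ‖ ^ (-p)) := by
          refine setLIntegral_mono (meas_aux p _) fun ξ hξ => ?_
          have hgt : 1/r < ‖ξ‖ := hξ
          have hξ0 : 0 < ‖ξ‖ := lt_trans (by positivity) hgt
          refine ENNReal.ofReal_le_ofReal ?_
          have hAr : Ag (r • ξ) ≤ (r * ‖ξ‖)⁻¹ := by
            have h := Ag_le_inv (r • ξ) (by rw [hnorm]; positivity)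
            rwa [hnorm] at h
          calc Ag ξ ^ ℓ * Ag (r • ξ) ^ ℓ = (Ag ξ * Ag (r • ξ)) ^ ℓ := (mul_pow _ _ _).symm
            _ ≤ (‖ξ‖⁻¹ * (r * ‖ξ‖)⁻¹) ^ ℓ := by
                refine pow_le_pow_left₀ (mul_nonneg (Ag_nonneg _) (Ag_nonneg _)) ?_ ℓ
                exact mul_le_mul (Ag_le_inv ξ hξ0) hAr (Ag_nonneg _) (by positivity)
            _ = (r⁻¹) ^ ℓ * ‖ξ‖ ^ (-p) := by
                rw [show ‖ξ‖⁻¹ * (r * ‖ξ‖)⁻¹ = r⁻¹ * (‖ξ‖ ^ 2)⁻¹ by field_simp,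
                  mul_pow]
                congr 1
                rw [inv_pow, ← pow_mul, ← Real.rpow_natCast ‖ξ‖ (2 * ℓ),
                  ← Real.rpow_neg (norm_nonneg _), hp]
      _ = ENNReal.ofReal ((r⁻¹) ^ ℓ) * ∫⁻ ξ in s₃, ENNReal.ofReal (‖ξ‖ ^ (-p)) := by
          simp_rw [ENNReal.ofReal_mul (by positivity : (0:ℝ) ≤ (r⁻¹) ^ ℓ)]
          exact lintegral_const_mul _ (measurable_norm.pow measurable_const).ennreal_ofReal
      _ = ENNReal.ofReal ((r⁻¹) ^ ℓ) * (ENNReal.ofReal ((1/r) ^ ((d:ℝ) - p)) * T) := by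
          rw [hs₃, tail_eq p (by positivity), hT_def]
      _ ≤ ENNReal.ofReal (Tr * r ^ ((ℓ : ℝ) - d)) := by
          rw [hTofReal, ← ENNReal.ofReal_mul (by positivity), ← ENNReal.ofReal_mul (by positivity)]
          refine ENNReal.ofReal_le_ofReal (le_of_eq ?_)
          have h3 : (r⁻¹) ^ ℓ = r ^ (-(ℓ:ℝ)) := by
            rw [Real.rpow_neg hr.le, Real.rpow_natCast, inv_pow]
          have h4 : (1/r) ^ ((d:ℝ) - p) = r ^ (p - (d:ℝ)) := by
            rw [one_div, Real.inv_rpow hr.le, ← Real.rpow_neg hr.le, neg_sub]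
          have hexp : -(ℓ:ℝ) + (p - (d:ℝ)) = (ℓ:ℝ) - d := by rw [hp]; push_cast; ring
          calc (r⁻¹) ^ ℓ * ((1/r) ^ ((d:ℝ) - p) * Tr)
              = (r ^ (-(ℓ:ℝ)) * r ^ (p - (d:ℝ))) * Tr := by rw [h3, h4]; ring
            _ = r ^ ((ℓ:ℝ) - d) * Tr := by rw [← Real.rpow_add hr, hexp]
            _ = Tr * r ^ ((ℓ:ℝ) - d) := mul_comm _ _
  have hx : 0 ≤ r ^ ((ℓ:ℝ) - d) := Real.rpow_nonneg hr.le _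
  calc ∫⁻ ξ : EuclideanSpace ℝ (Fin d), ENNReal.ofReal (Ag ξ ^ ℓ * Ag (r • ξ) ^ ℓ)
      = ∫⁻ ξ in Set.univ, ENNReal.ofReal (Ag ξ ^ ℓ * Ag (r • ξ) ^ ℓ) :=
        (setLIntegral_univ _).symm
    _ ≤ ∫⁻ ξ in s₁ ∪ s₂ ∪ s₃, ENNReal.ofReal (Ag ξ ^ ℓ * Ag (r • ξ) ^ ℓ) :=
        lintegral_mono_set hcover
    _ ≤ (∫⁻ ξ in s₁ ∪ s₂, ENNReal.ofReal (Ag ξ ^ ℓ * Ag (r • ξ) ^ ℓ)) +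
          ∫⁻ ξ in s₃, ENNReal.ofReal (Ag ξ ^ ℓ * Ag (r • ξ) ^ ℓ) := lintegral_union_le _ _ _
    _ ≤ ((∫⁻ ξ in s₁, ENNReal.ofReal (Ag ξ ^ ℓ * Ag (r • ξ) ^ ℓ)) +
          ∫⁻ ξ in s₂, ENNReal.ofReal (Ag ξ ^ ℓ * Ag (r • ξ) ^ ℓ)) +
          ∫⁻ ξ in s₃, ENNReal.ofReal (Ag ξ ^ ℓ * Ag (r • ξ) ^ ℓ) :=
        add_le_add_left (lintegral_union_le _ _ _) _
    _ ≤ (ENNReal.ofReal (K * r ^ ((ℓ : ℝ) - d)) + ENNReal.ofReal (K * r ^ ((ℓ : ℝ) - d))) +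
          ENNReal.ofReal (Tr * r ^ ((ℓ : ℝ) - d)) := add_le_add (add_le_add ht1 ht2) ht3
    _ = ENNReal.ofReal ((K * r ^ ((ℓ : ℝ) - d) + K * r ^ ((ℓ : ℝ) - d)) +
          Tr * r ^ ((ℓ : ℝ) - d)) := by
        rw [ENNReal.ofReal_add (by positivity) (by positivity),
          ENNReal.ofReal_add (by positivity) (by positivity)]
    _ ≤ ENNReal.ofReal ((2 * K + Tr + 1) * r ^ ((ℓ : ℝ) - d)) :=
        ENNReal.ofReal_le_ofReal (by nlinarith)

end SimPhi3

/-- For `A(ξ) = min(|ξ|, 1/(1+|ξ|))` on `ℝ^d` and an integer `ℓ > d`, there is `C > 0`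
with `∫_{ℝ^d} A(ξ)^ℓ A(rξ)^ℓ dξ ≤ C min(r^{ℓ−d}, r^{d−ℓ})` for all `r > 0`. -/
theorem similitude_Phi_estimate (d ℓ : ℕ) (hℓ : d < ℓ) :
    ∃ C > 0, ∀ r : ℝ, 0 < r →
      ∫⁻ ξ : EuclideanSpace ℝ (Fin d),
          ENNReal.ofReal ((min ‖ξ‖ (1 / (1 + ‖ξ‖))) ^ ℓ *
            (min ‖r • ξ‖ (1 / (1 + ‖r • ξ‖))) ^ ℓ)
        ≤ ENNReal.ofReal (C * min (r ^ ((ℓ : ℝ) - d)) (r ^ ((d : ℝ) - ℓ))) := by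
  obtain ⟨C, hC, hbound⟩ := key_small d ℓ hℓ
  have hdl : (d : ℝ) < ℓ := Nat.cast_lt.2 hℓ
  have hd0 : (0:ℝ) ≤ d := Nat.cast_nonneg d
  refine ⟨C, hC, fun r hr => ?_⟩
  have hgoal : ∀ (s : ℝ), (fun ξ : EuclideanSpace ℝ (Fin d) =>
      ENNReal.ofReal ((min ‖ξ‖ (1 / (1 + ‖ξ‖))) ^ ℓ *
        (min ‖s • ξ‖ (1 / (1 + ‖s • ξ‖))) ^ ℓ)) =
      fun ξ => ENNReal.ofReal (Ag ξ ^ ℓ * Ag (s • ξ) ^ ℓ) := fun s => rfl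
  rcases le_or_gt r 1 with h1 | h1
  · have hmin : min (r ^ ((ℓ : ℝ) - d)) (r ^ ((d : ℝ) - ℓ)) = r ^ ((ℓ : ℝ) - d) :=
      min_eq_left (Real.rpow_le_rpow_of_exponent_ge hr h1 (by linarith))
    rw [hmin, hgoal r]
    exact hbound r hr h1
  · -- r > 1 : substitute ξ ↦ r⁻¹ • x
    have hr1 : r ≠ 0 := hr.ne'
    have hmeas : Measurable (fun x : EuclideanSpace ℝ (Fin d) =>
        ENNReal.ofReal (Ag (r⁻¹ • x) ^ ℓ * Ag x ^ ℓ)) :=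
      (((Ag_continuous.comp (continuous_const_smul r⁻¹)).pow ℓ).mul
        (Ag_continuous.pow ℓ)).measurable.ennreal_ofReal
    have hsub : ∫⁻ ξ : EuclideanSpace ℝ (Fin d), ENNReal.ofReal (Ag ξ ^ ℓ * Ag (r • ξ) ^ ℓ)
        = ENNReal.ofReal |(r ^ d : ℝ)|⁻¹ *
            ∫⁻ x : EuclideanSpace ℝ (Fin d), ENNReal.ofReal (Ag (r⁻¹ • x) ^ ℓ * Ag x ^ ℓ) := by
      rw [← lint_comp_smul _ hmeas hr1]
      refine lintegral_congr fun ξ => ?_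
      rw [inv_smul_smul₀ hr1]
    have hswap : ∫⁻ x : EuclideanSpace ℝ (Fin d), ENNReal.ofReal (Ag (r⁻¹ • x) ^ ℓ * Ag x ^ ℓ)
        = ∫⁻ x : EuclideanSpace ℝ (Fin d), ENNReal.ofReal (Ag x ^ ℓ * Ag (r⁻¹ • x) ^ ℓ) :=
      lintegral_congr fun x => by rw [mul_comm]
    have hinv0 : 0 < r⁻¹ := inv_pos.2 hr
    have hinv1 : r⁻¹ ≤ 1 := by
      rw [inv_le_one_iff₀]; right; exact h1.le
    have hb := hbound r⁻¹ hinv0 hinv1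
    have hmin : min (r ^ ((ℓ : ℝ) - d)) (r ^ ((d : ℝ) - ℓ)) = r ^ ((d : ℝ) - ℓ) :=
      min_eq_right (Real.rpow_le_rpow_of_exponent_le h1.le (by linarith))
    rw [hmin, hgoal r, hsub, hswap]
    calc ENNReal.ofReal |(r ^ d : ℝ)|⁻¹ *
          ∫⁻ x : EuclideanSpace ℝ (Fin d), ENNReal.ofReal (Ag x ^ ℓ * Ag (r⁻¹ • x) ^ ℓ)
        ≤ ENNReal.ofReal |(r ^ d : ℝ)|⁻¹ * ENNReal.ofReal (C * r⁻¹ ^ ((ℓ : ℝ) - d)) :=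
          mul_le_mul_right hb _
      _ = ENNReal.ofReal (|(r ^ d : ℝ)|⁻¹ * (C * r⁻¹ ^ ((ℓ : ℝ) - d))) :=
          (ENNReal.ofReal_mul (by positivity)).symm
      _ ≤ ENNReal.ofReal (C * r ^ ((d : ℝ) - ℓ)) := by
          refine ENNReal.ofReal_le_ofReal ?_
          have e1 : |(r ^ d : ℝ)|⁻¹ = r ^ (-(d:ℝ)) := by
            rw [abs_of_pos (pow_pos hr d), Real.rpow_neg hr.le, Real.rpow_natCast]
          have e2 : r⁻¹ ^ ((ℓ : ℝ) - d) = r ^ ((d:ℝ) - ℓ) := by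
            rw [Real.inv_rpow hr.le, ← Real.rpow_neg hr.le, neg_sub]
          rw [e1, e2, ← mul_assoc, mul_comm _ C, mul_assoc, ← Real.rpow_add hr]
          refine mul_le_mul_of_nonneg_left ?_ hC.le
          exact Real.rpow_le_rpow_of_exponent_le h1.le (by linarith)
end

section
/- Let O₁ ⊆ ℝ^{d₁}, O₂ ⊆ ℝ^{d₂} be open sets with nonempty complements, and let O = O₁ × O₂ ⊆ ℝ^{d₁+d₂}. Then for ξ = (ξ₁,ξ₂) ∈ O one has A(ξ)² ≤ A₁(ξ₁)·A₂(ξ₂), where A, A₁, A₂ are the auxiliary functions associated to O, O₁, O₂ respectively. -/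
open Metric

/-- The auxiliary function associated to a subset `O` of a normed space. -/
noncomputable def auxA {E : Type*} [NormedAddCommGroup E] (O : Set E) (ξ : E) : ℝ :=
  min (infDist ξ Oᶜ / (1 + Real.sqrt (‖ξ‖ ^ 2 - infDist ξ Oᶜ ^ 2)))
    (1 / (1 + ‖ξ‖))

/-- Auxiliary: `auxA` is nonnegative. -/
lemma auxA_nonneg {E : Type*} [NormedAddCommGroup E] (O : Set E) (ξ : E) :
    0 ≤ auxA O ξ := by
  apply le_min
  · apply div_nonneg infDist_nonneg
    positivity
  · positivity

/-- Generic comparison lemma: if the full distance to the complement is at most the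
partial one, and the full norm squared dominates, then `auxA` decreases. -/
lemma auxA_le_of_le {E F : Type*} [NormedAddCommGroup E] [NormedAddCommGroup F]
    (O : Set E) (P : Set F) (ξ : E) (η : F)
    (hd : infDist ξ Oᶜ ≤ infDist η Pᶜ)
    (hn : ‖η‖ ≤ ‖ξ‖)
    (hsq : ‖η‖ ^ 2 - infDist η Pᶜ ^ 2 ≤ ‖ξ‖ ^ 2 - infDist ξ Oᶜ ^ 2) :
    auxA O ξ ≤ auxA P η := by
  apply le_min
  · refine le_trans (min_le_left _ _) ?_
    exact div_le_div₀ infDist_nonneg hd (by positivity)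
      (add_le_add_right (Real.sqrt_le_sqrt hsq) 1)
  · refine le_trans (min_le_right _ _) ?_
    apply one_div_le_one_div_of_le (by positivity)
    linarith

/-- For open sets `O₁ ⊆ ℝ^{d₁}`, `O₂ ⊆ ℝ^{d₂}` with `0` in their complements, and
`O = O₁ × O₂ ⊆ ℝ^{d₁+d₂}` (euclidean product), one has `A(ξ₁,ξ₂)² ≤ A₁(ξ₁)·A₂(ξ₂)`. -/
theorem auxA_product_estimate (d₁ d₂ : ℕ)
    (O₁ : Set (EuclideanSpace ℝ (Fin d₁))) (O₂ : Set (EuclideanSpace ℝ (Fin d₂)))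
    (hO₁ : IsOpen O₁) (hO₂ : IsOpen O₂)
    (h01 : (0 : EuclideanSpace ℝ (Fin d₁)) ∈ O₁ᶜ)
    (h02 : (0 : EuclideanSpace ℝ (Fin d₂)) ∈ O₂ᶜ)
    (ξ₁ : EuclideanSpace ℝ (Fin d₁)) (hξ₁ : ξ₁ ∈ O₁)
    (ξ₂ : EuclideanSpace ℝ (Fin d₂)) (hξ₂ : ξ₂ ∈ O₂) :
    auxA ((WithLp.equiv 2 (EuclideanSpace ℝ (Fin d₁) × EuclideanSpace ℝ (Fin d₂))).symm ''
        (O₁ ×ˢ O₂))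
      ((WithLp.equiv 2 (EuclideanSpace ℝ (Fin d₁) × EuclideanSpace ℝ (Fin d₂))).symm
        (ξ₁, ξ₂)) ^ 2
      ≤ auxA O₁ ξ₁ * auxA O₂ ξ₂ := by
  set e := (WithLp.equiv 2 (EuclideanSpace ℝ (Fin d₁) × EuclideanSpace ℝ (Fin d₂))).symm
  set O := e '' (O₁ ×ˢ O₂) with hO
  set ξ := e (ξ₁, ξ₂) with hξdef
  -- norm identity
  have hnorm : ‖ξ‖ ^ 2 = ‖ξ₁‖ ^ 2 + ‖ξ₂‖ ^ 2 := WithLp.prod_norm_sq_eq_of_L2 ξ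
  have hn1 : ‖ξ₁‖ ≤ ‖ξ‖ := by
    rw [← Real.sqrt_sq (norm_nonneg ξ₁), ← Real.sqrt_sq (norm_nonneg ξ)]
    apply Real.sqrt_le_sqrt; rw [hnorm]; nlinarith [sq_nonneg ‖ξ₂‖, sq_nonneg ‖ξ₁‖]
  have hn2 : ‖ξ₂‖ ≤ ‖ξ‖ := by
    rw [← Real.sqrt_sq (norm_nonneg ξ₂), ← Real.sqrt_sq (norm_nonneg ξ)]
    apply Real.sqrt_le_sqrt; rw [hnorm]; nlinarith [sq_nonneg ‖ξ₂‖, sq_nonneg ‖ξ₁‖]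
  -- distance comparison
  have hmem : ∀ (η₁ : EuclideanSpace ℝ (Fin d₁)) (η₂ : EuclideanSpace ℝ (Fin d₂)), η₁ ∈ O₁ᶜ ∨ η₂ ∈ O₂ᶜ → e (η₁, η₂) ∈ Oᶜ := by
    intro η₁ η₂ h hmem
    rw [hO, Set.mem_image] at hmem
    obtain ⟨p, hp, hpe⟩ := hmem
    have : p = (η₁, η₂) := (WithLp.equiv 2 _).symm.injective hpe
    subst this
    rcases h with h | h
    · exact h hp.1
    · exact h hp.2
  have hd1 : infDist ξ Oᶜ ≤ infDist ξ₁ O₁ᶜ := by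
    rw [← not_lt]
    intro hlt
    obtain ⟨η, hη, hdist⟩ := (infDist_lt_iff ⟨0, h01⟩).mp hlt
    have h1 : infDist ξ Oᶜ ≤ dist ξ (e (η, ξ₂)) :=
      infDist_le_dist_of_mem (hmem η ξ₂ (Or.inl hη))
    have h2 : dist ξ (e (η, ξ₂)) = dist ξ₁ η := by
      rw [WithLp.prod_dist_eq_of_L2]
      show Real.sqrt (dist ξ₁ η ^ 2 + dist ξ₂ ξ₂ ^ 2) = _
      rw [dist_self]
      simp [Real.sqrt_sq dist_nonneg]
    rw [h2] at h1
    exact absurd (lt_of_le_of_lt h1 hdist) (lt_irrefl _)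
  have hd2 : infDist ξ Oᶜ ≤ infDist ξ₂ O₂ᶜ := by
    rw [← not_lt]
    intro hlt
    obtain ⟨η, hη, hdist⟩ := (infDist_lt_iff ⟨0, h02⟩).mp hlt
    have h1 : infDist ξ Oᶜ ≤ dist ξ (e (ξ₁, η)) :=
      infDist_le_dist_of_mem (hmem ξ₁ η (Or.inr hη))
    have h2 : dist ξ (e (ξ₁, η)) = dist ξ₂ η := by
      rw [WithLp.prod_dist_eq_of_L2]
      show Real.sqrt (dist ξ₁ ξ₁ ^ 2 + dist ξ₂ η ^ 2) = _
      rw [dist_self]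
      simp [Real.sqrt_sq dist_nonneg]
    rw [h2] at h1
    exact absurd (lt_of_le_of_lt h1 hdist) (lt_irrefl _)
  have hd0 : 0 ≤ infDist ξ Oᶜ := infDist_nonneg
  have hA1 : auxA O ξ ≤ auxA O₁ ξ₁ := by
    apply auxA_le_of_le _ _ _ _ hd1 hn1
    have h1 : infDist ξ Oᶜ ^ 2 ≤ infDist ξ₁ O₁ᶜ ^ 2 := by
      apply pow_le_pow_left₀ hd0 hd1
    nlinarith [sq_nonneg ‖ξ₂‖]
  have hA2 : auxA O ξ ≤ auxA O₂ ξ₂ := by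
    apply auxA_le_of_le _ _ _ _ hd2 hn2
    have h1 : infDist ξ Oᶜ ^ 2 ≤ infDist ξ₂ O₂ᶜ ^ 2 := by
      apply pow_le_pow_left₀ hd0 hd2
    nlinarith [sq_nonneg ‖ξ₁‖]
  have h0 : 0 ≤ auxA O ξ := auxA_nonneg O ξ
  calc auxA O ξ ^ 2 = auxA O ξ * auxA O ξ := sq (auxA O ξ)
    _ ≤ auxA O₁ ξ₁ * auxA O₂ ξ₂ := mul_le_mul hA1 hA2 h0 (le_trans h0 hA1)
end

section
/- Let Ω ⊆ ℝ^n be open with 0 ∈ Ω^c and A_Ω its auxiliary function. For the product orbit O = O₁ × ⋯ × O_k ⊆ ℝ^d (d = d₁+⋯+d_k) one has A_O(ξ) ≤ A_{O_{j₀}}(ξ_{j₀}) for every component index j₀, and consequently A_O(ξ)^k ≤ ∏_{j=1}^k A_{O_j}(ξ_j). -/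
open Metric
open scoped ENNReal

lemma piLp_norm_apply_le {k : ℕ} {β : Fin k → Type*} [∀ j, NormedAddCommGroup (β j)]
    (ξ : PiLp 2 β) (j : Fin k) : ‖ξ j‖ ≤ ‖ξ‖ := by
  rw [PiLp.norm_eq_sum (by norm_num : (0:ℝ) < (2:ℝ≥0∞).toReal)]
  have h2 : ((2:ℝ≥0∞)).toReal = (2:ℝ) := by norm_num
  rw [h2]
  have h1 : ‖ξ j‖ ^ (2:ℝ) ≤ ∑ i, ‖ξ i‖ ^ (2:ℝ) :=
    Finset.single_le_sum (fun i _ => Real.rpow_nonneg (norm_nonneg _) _) (Finset.mem_univ j)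
  calc ‖ξ j‖ = (‖ξ j‖ ^ (2:ℝ)) ^ (1/2 : ℝ) := by
        rw [← Real.rpow_mul (norm_nonneg _)]
        norm_num
    _ ≤ (∑ i, ‖ξ i‖ ^ (2:ℝ)) ^ (1/2 : ℝ) :=
        Real.rpow_le_rpow (Real.rpow_nonneg (norm_nonneg _) _) h1 (by norm_num)

lemma piLp_dist_update {k : ℕ} {β : Fin k → Type*} [∀ j, NormedAddCommGroup (β j)]
    (ξ : PiLp 2 β) (j : Fin k) (y : β j) :
    dist ξ (WithLp.toLp 2 (Function.update ξ.ofLp j y)) = dist (ξ j) y := by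
  rw [PiLp.dist_eq_sum (by norm_num : (0:ℝ) < (2:ℝ≥0∞).toReal)]
  have h2 : ((2:ℝ≥0∞)).toReal = (2:ℝ) := by norm_num
  rw [h2]
  simp only [PiLp.toLp_apply]
  have : ∑ i, dist (ξ i) (Function.update ξ j y i) ^ (2:ℝ) = dist (ξ j) y ^ (2:ℝ) := by
    rw [Finset.sum_eq_single j]
    · rw [Function.update_self]
    · intro i _ hi
      rw [Function.update_of_ne hi]
      simp [Real.zero_rpow (by norm_num : (2:ℝ) ≠ 0)]
    · simp
  rw [this, ← Real.rpow_mul dist_nonneg]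
  norm_num

/-- For the product orbit `O = O₁ × ⋯ × O_k` one has `A_O(ξ) ≤ A_{O_{j₀}}(ξ_{j₀})`
for every component `j₀`, and hence `A_O(ξ)^k ≤ ∏_j A_{O_j}(ξ_j)`. -/
theorem auxA_multi_product_estimate {k : ℕ} (d : Fin k → ℕ)
    (O : ∀ j, Set (EuclideanSpace ℝ (Fin (d j))))
    (hO : ∀ j, IsOpen (O j))
    (h0 : ∀ j, (0 : EuclideanSpace ℝ (Fin (d j))) ∈ (O j)ᶜ)
    (ξ : PiLp 2 fun j => EuclideanSpace ℝ (Fin (d j)))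
    (hξ : ∀ j, ξ j ∈ O j) :
    (∀ j₀ : Fin k,
      auxA {η : PiLp 2 fun j => EuclideanSpace ℝ (Fin (d j)) | ∀ j, η j ∈ O j} ξ
        ≤ auxA (O j₀) (ξ j₀)) ∧
    auxA {η : PiLp 2 fun j => EuclideanSpace ℝ (Fin (d j)) | ∀ j, η j ∈ O j} ξ ^ k
      ≤ ∏ j, auxA (O j) (ξ j) := by
  set S := {η : PiLp 2 fun j => EuclideanSpace ℝ (Fin (d j)) | ∀ j, η j ∈ O j} with hS
  -- key per-component estimate
  have key : ∀ j₀ : Fin k, auxA S ξ ≤ auxA (O j₀) (ξ j₀) := by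
    intro j₀
    set D := infDist ξ Sᶜ with hD
    set D₀ := infDist (ξ j₀) (O j₀)ᶜ with hD₀
    have hDD₀ : D ≤ D₀ := by
      by_contra h
      push_neg at h
      obtain ⟨y, hy, hdy⟩ := (infDist_lt_iff ⟨0, h0 j₀⟩).mp h
      have hmem : WithLp.toLp 2 (Function.update ξ.ofLp j₀ y) ∈ Sᶜ := by
        intro hc
        exact hy (by simpa using hc j₀)
      have : D ≤ dist ξ (WithLp.toLp 2 (Function.update ξ.ofLp j₀ y)) := infDist_le_dist_of_mem hmem
      rw [piLp_dist_update] at this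
      exact (this.trans_lt hdy).false
    have hR : ‖ξ j₀‖ ≤ ‖ξ‖ := piLp_norm_apply_le ξ j₀
    have hDnn : 0 ≤ D := infDist_nonneg
    have hD₀nn : 0 ≤ D₀ := infDist_nonneg
    have hsq : ‖ξ j₀‖ ^ 2 - D₀ ^ 2 ≤ ‖ξ‖ ^ 2 - D ^ 2 := by
      have h1 : ‖ξ j₀‖ ^ 2 ≤ ‖ξ‖ ^ 2 := pow_le_pow_left₀ (norm_nonneg _) hR 2
      have h2 : D ^ 2 ≤ D₀ ^ 2 := pow_le_pow_left₀ hDnn hDD₀ 2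
      linarith
    unfold auxA
    apply min_le_min
    · apply div_le_div₀ hD₀nn hDD₀
      · positivity
      · have := Real.sqrt_le_sqrt hsq
        linarith
    · apply div_le_div_of_nonneg_left one_pos.le (by positivity)
      linarith
  refine ⟨key, ?_⟩
  have hAnn : 0 ≤ auxA S ξ := by
    unfold auxA
    apply le_min
    · apply div_nonneg infDist_nonneg
      positivity
    · positivity
  calc auxA S ξ ^ k = ∏ _j : Fin k, auxA S ξ := by simp
    _ ≤ ∏ j, auxA (O j) (ξ j) :=
        Finset.prod_le_prod (fun j _ => hAnn) (fun j _ => key j)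
end

section
/- Let c ∈ ℝ and t, r₁, r₂ ≥ 1 be integers with r₂ > 1 and t ≥ 3r₁ + (3+6|c|)r₂ + 6|c| + 2. Then there is a constant C > 0 such that for every a ≠ 0 and b ∈ ℝ, ∫_{ℝ²} A(ξ)^t A(hᵀξ)^t dξ ≤ C (|a|+|a|^{-1})^{-r₁} (1+|b|)^{-r₂}, where h = [[a,b],[0,a^c]] and A(ξ) = min(|ξ₁|/(1+|ξ₂|), 1/(1+|ξ|)). -/
open MeasureTheory

/-- The auxiliary function of the shearlet dual orbit:
`A(ξ) = min(|ξ₁|/(1+|ξ₂|), 1/(1+|ξ|))` on `ℝ²`. -/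
noncomputable def shearA (ξ : Fin 2 → ℝ) : ℝ :=
  min (|ξ 0| / (1 + |ξ 1|)) (1 / (1 + Real.sqrt (ξ 0 ^ 2 + ξ 1 ^ 2)))

namespace ShearletAux

lemma shearA_nonneg (ξ : Fin 2 → ℝ) : 0 ≤ shearA ξ := by
  have h1 : (0:ℝ) ≤ |ξ 0| / (1 + |ξ 1|) := by positivity
  have h2 : (0:ℝ) ≤ 1 / (1 + Real.sqrt (ξ 0 ^ 2 + ξ 1 ^ 2)) := by positivity
  exact le_min h1 h2

lemma shearA_le_div (ξ : Fin 2 → ℝ) : shearA ξ ≤ |ξ 0| / (1 + |ξ 1|) := min_le_left _ _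

lemma shearA_le_inv_sqrt (ξ : Fin 2 → ℝ) :
    shearA ξ ≤ 1 / (1 + Real.sqrt (ξ 0 ^ 2 + ξ 1 ^ 2)) := min_le_right _ _

lemma shearA_le_abs_fst (ξ : Fin 2 → ℝ) : shearA ξ ≤ |ξ 0| := by
  refine (shearA_le_div ξ).trans ?_
  rw [div_le_iff₀ (by positivity)]
  nlinarith [abs_nonneg (ξ 0), abs_nonneg (ξ 1)]

lemma shearA_le_one (ξ : Fin 2 → ℝ) : shearA ξ ≤ 1 := by
  refine (shearA_le_inv_sqrt ξ).trans ?_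
  rw [div_le_one (by positivity)]
  have := Real.sqrt_nonneg (ξ 0 ^ 2 + ξ 1 ^ 2); linarith

lemma abs_le_sqrt0 (ξ : Fin 2 → ℝ) : |ξ 0| ≤ Real.sqrt (ξ 0 ^ 2 + ξ 1 ^ 2) := by
  rw [← Real.sqrt_sq_eq_abs]
  exact Real.sqrt_le_sqrt (by nlinarith [sq_nonneg (ξ 1)])

lemma abs_le_sqrt1 (ξ : Fin 2 → ℝ) : |ξ 1| ≤ Real.sqrt (ξ 0 ^ 2 + ξ 1 ^ 2) := by
  rw [← Real.sqrt_sq_eq_abs]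
  exact Real.sqrt_le_sqrt (by nlinarith [sq_nonneg (ξ 0)])

lemma shearA_le_inv_abs_fst (ξ : Fin 2 → ℝ) : shearA ξ ≤ 1 / (1 + |ξ 0|) := by
  refine (shearA_le_inv_sqrt ξ).trans ?_
  exact one_div_le_one_div_of_le (by positivity)
    (by have := abs_le_sqrt0 ξ; linarith)

lemma shearA_le_inv_norm (ξ : Fin 2 → ℝ) : shearA ξ ≤ (1 + ‖ξ‖)⁻¹ := by
  refine (shearA_le_inv_sqrt ξ).trans ?_
  rw [one_div]
  have hnorm : ‖ξ‖ ≤ Real.sqrt (ξ 0 ^ 2 + ξ 1 ^ 2) := by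
    rw [pi_norm_le_iff_of_nonneg (Real.sqrt_nonneg _)]
    intro i
    fin_cases i
    · simpa [Real.norm_eq_abs] using abs_le_sqrt0 ξ
    · simpa [Real.norm_eq_abs] using abs_le_sqrt1 ξ
  exact inv_anti₀ (by positivity) (by linarith)

lemma one_le_max {a : ℝ} (ha : a ≠ 0) : (1:ℝ) ≤ max |a| |a|⁻¹ := by
  have ha0 : (0:ℝ) < |a| := abs_pos.2 ha
  rcases le_total 1 |a| with h | h
  · exact h.trans (le_max_left _ _)
  · exact ((one_le_inv₀ ha0).2 h).trans (le_max_right _ _)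

lemma abs_rpow_le_max {a : ℝ} (ha : a ≠ 0) (c : ℝ) :
    |a| ^ c ≤ (max |a| |a|⁻¹) ^ |c| := by
  have ha0 : (0:ℝ) < |a| := abs_pos.2 ha
  rcases le_or_gt 0 c with hc | hc
  · rw [abs_of_nonneg hc]
    exact Real.rpow_le_rpow ha0.le (le_max_left _ _) hc
  · rw [abs_of_neg hc]
    have h1 : |a| ^ c = (|a|⁻¹) ^ (-c) := by
      rw [Real.inv_rpow ha0.le, Real.rpow_neg ha0.le, inv_inv]
    rw [h1]
    exact Real.rpow_le_rpow (by positivity) (le_max_right _ _) (by linarith)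

/-- Key pointwise estimate (a-decay): `A(ξ)A(hᵀξ) ≤ (max |a| |a|⁻¹)⁻¹`. -/
lemma prod_le_inv_max (c : ℝ) {a : ℝ} (ha : a ≠ 0) (b : ℝ) (ξ : Fin 2 → ℝ) :
    shearA ξ * shearA ![a * ξ 0, b * ξ 0 + Real.sign a * |a| ^ c * ξ 1]
      ≤ (max |a| |a|⁻¹)⁻¹ := by
  set η : Fin 2 → ℝ := ![a * ξ 0, b * ξ 0 + Real.sign a * |a| ^ c * ξ 1] with hηdef
  have hη0 : η 0 = a * ξ 0 := rfl
  have ha0 : (0:ℝ) < |a| := abs_pos.2 ha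
  rcases le_total 1 |a| with h1 | h1
  · have hmax : max |a| |a|⁻¹ = |a| :=
      max_eq_left ((inv_le_one_of_one_le₀ h1).trans h1)
    rw [hmax]
    have hu := shearA_le_abs_fst ξ
    have hv : shearA η ≤ 1 / (1 + |a * ξ 0|) := by
      have h := shearA_le_inv_abs_fst η
      rwa [hη0] at h
    calc shearA ξ * shearA η ≤ |ξ 0| * (1 / (1 + |a * ξ 0|)) :=
          mul_le_mul hu hv (shearA_nonneg η) (abs_nonneg _)
      _ ≤ |a|⁻¹ := by
          rw [mul_one_div, div_le_iff₀ (by positivity), abs_mul]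
          have h2 : |a|⁻¹ * (|a| * |ξ 0|) = |ξ 0| := by field_simp
          have h3 : (0:ℝ) ≤ |a|⁻¹ := by positivity
          nlinarith
  · have hmax : max |a| |a|⁻¹ = |a|⁻¹ :=
      max_eq_right (h1.trans ((one_le_inv₀ ha0).2 h1))
    rw [hmax, inv_inv]
    have hu := shearA_le_inv_abs_fst ξ
    have hv : shearA η ≤ |a * ξ 0| := by
      have h := shearA_le_abs_fst η
      rwa [hη0] at h
    calc shearA ξ * shearA η ≤ 1 / (1 + |ξ 0|) * |a * ξ 0| :=
          mul_le_mul hu hv (shearA_nonneg η) (by positivity)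
      _ ≤ |a| := by
          rw [abs_mul, one_div, inv_mul_eq_div, div_le_iff₀ (by positivity)]
          nlinarith [abs_nonneg (ξ 0), ha0.le]

/-- Key pointwise estimate (b-decay):
`A(ξ)A(hᵀξ)(1+|b|) ≤ 4 (max |a| |a|⁻¹)^(1+|c|)`. -/
lemma prod_mul_le (c : ℝ) {a : ℝ} (ha : a ≠ 0) (b : ℝ) (ξ : Fin 2 → ℝ) :
    shearA ξ * shearA ![a * ξ 0, b * ξ 0 + Real.sign a * |a| ^ c * ξ 1] * (1 + |b|)
      ≤ 4 * (max |a| |a|⁻¹) ^ (1 + |c|) := by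
  set M := max |a| |a|⁻¹ with hMdef
  set η : Fin 2 → ℝ := ![a * ξ 0, b * ξ 0 + Real.sign a * |a| ^ c * ξ 1] with hηdef
  have hη0 : η 0 = a * ξ 0 := rfl
  have hη1 : η 1 = b * ξ 0 + Real.sign a * |a| ^ c * ξ 1 := rfl
  have ha0 : (0:ℝ) < |a| := abs_pos.2 ha
  have hM1 : (1:ℝ) ≤ M := one_le_max ha
  have hMc : |a| ^ c ≤ M ^ |c| := abs_rpow_le_max ha c
  have hMe1 : M ^ |c| ≤ M ^ (1 + |c|) :=
    Real.rpow_le_rpow_of_exponent_le hM1 (by linarith)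
  have hMe2 : M ≤ M ^ (1 + |c|) := by
    have h := Real.rpow_le_rpow_of_exponent_le hM1
      (show (1:ℝ) ≤ 1 + |c| by have := abs_nonneg c; linarith)
    rwa [Real.rpow_one] at h
  have hMe3 : (1:ℝ) ≤ M ^ (1 + |c|) :=
    Real.one_le_rpow hM1 (by have := abs_nonneg c; linarith)
  have hsign : |Real.sign a| = 1 := by
    rcases lt_or_gt_of_ne ha with h | h
    · rw [Real.sign_of_neg h]; norm_num
    · rw [Real.sign_of_pos h]; norm_num
  have hu0 := shearA_nonneg ξ
  have hv0 := shearA_nonneg η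
  have hu1 := shearA_le_one ξ
  have hv1 := shearA_le_one η
  have hp0 : (0:ℝ) < |a| ^ c := Real.rpow_pos_of_pos ha0 c
  -- main claim: u*v*|b| ≤ 2 * M^(1+|c|)
  have key : shearA ξ * shearA η * |b| ≤ 2 * M ^ (1 + |c|) := by
    rcases le_total (|b| * |ξ 0|) (2 * (|a| ^ c) * |ξ 1|) with hcase | hcase
    · -- u * |b| ≤ 2 |a|^c
      have hub : shearA ξ * |b| ≤ 2 * |a| ^ c := by
        have h := shearA_le_div ξ
        have hd : (0:ℝ) < 1 + |ξ 1| := by positivity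
        have h2 : shearA ξ * |b| ≤ |ξ 0| / (1 + |ξ 1|) * |b| :=
          mul_le_mul_of_nonneg_right h (abs_nonneg b)
        refine h2.trans ?_
        rw [div_mul_eq_mul_div, div_le_iff₀ hd]
        nlinarith [abs_nonneg (ξ 0), abs_nonneg (ξ 1), abs_nonneg b, hp0.le]
      calc shearA ξ * shearA η * |b| = shearA ξ * |b| * shearA η := by ring
        _ ≤ 2 * |a| ^ c * 1 :=
            mul_le_mul hub hv1 hv0 (by positivity)
        _ = 2 * |a| ^ c := by ring
        _ ≤ 2 * M ^ (1 + |c|) := by nlinarith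
    · -- |η 1| ≥ |b| |ξ 0| / 2, so v * |b| ≤ 2 |a|
      have habs : |η 1| ≥ |b| * |ξ 0| - |a| ^ c * |ξ 1| := by
        rw [hη1]
        have h := abs_sub_abs_le_abs_sub (b * ξ 0) (-(Real.sign a * |a| ^ c * ξ 1))
        rw [sub_neg_eq_add, abs_neg] at h
        have h1 : |b * ξ 0| = |b| * |ξ 0| := abs_mul _ _
        have h2 : |Real.sign a * |a| ^ c * ξ 1| = |a| ^ c * |ξ 1| := by
          rw [abs_mul, abs_mul, hsign, one_mul, abs_of_pos hp0]
        linarith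
    -- so 1 + |η 1| ≥ 1 + |b||ξ0|/2
      have hη1ge : |b| * |ξ 0| / 2 ≤ |η 1| := by linarith
      have hvb : shearA η * |b| ≤ 2 * |a| := by
        have h := shearA_le_div η
        rw [hη0] at h
        have hd : (0:ℝ) < 1 + |η 1| := by positivity
        have h2 : shearA η * |b| ≤ |a * ξ 0| / (1 + |η 1|) * |b| :=
          mul_le_mul_of_nonneg_right h (abs_nonneg b)
        refine h2.trans ?_
        rw [abs_mul, div_mul_eq_mul_div, div_le_iff₀ hd]
        nlinarith [abs_nonneg (ξ 0), abs_nonneg b, ha0.le, abs_nonneg (η 1)]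
      calc shearA ξ * shearA η * |b| ≤ shearA η * |b| := by
            rw [mul_assoc]
            exact mul_le_of_le_one_left (mul_nonneg hv0 (abs_nonneg b)) hu1
        _ ≤ 2 * |a| := hvb
        _ ≤ 2 * M ^ (1 + |c|) := by
            have : |a| ≤ M := le_max_left _ _
            nlinarith
  have huv1 : shearA ξ * shearA η ≤ 1 := mul_le_one₀ hu1 hv0 hv1
  nlinarith [mul_nonneg hu0 hv0]

end ShearletAux

set_option maxHeartbeats 2000000 in
open ShearletAux in
/-- The key shearlet coefficient estimate: for integers `t, r₁, r₂ ≥ 1` with `r₂ > 1`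
and `t ≥ 3r₁ + (3+6|c|)r₂ + 6|c| + 2`, there is `C > 0` such that for all `a ≠ 0`, `b`,
`∫_{ℝ²} A(ξ)^t A(hᵀξ)^t dξ ≤ C (|a|+|a|⁻¹)^{-r₁} (1+|b|)^{-r₂}`, where
`hᵀξ = (aξ₁, bξ₁ + a^c ξ₂)` and `a^c = sign(a)|a|^c`. -/
theorem shearlet_Phi_estimate (c : ℝ) (t r₁ r₂ : ℕ) (ht1 : 1 ≤ t) (hr1 : 1 ≤ r₁)
    (hr2 : 1 < r₂)
    (ht : 3 * (r₁ : ℝ) + (3 + 6 * |c|) * r₂ + 6 * |c| + 2 ≤ t) :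
    ∃ C > 0, ∀ a b : ℝ, a ≠ 0 →
      ∫⁻ ξ : Fin 2 → ℝ,
          ENNReal.ofReal (shearA ξ ^ t *
            shearA ![a * ξ 0, b * ξ 0 + Real.sign a * |a| ^ c * ξ 1] ^ t)
        ≤ ENNReal.ofReal
            (C * (|a| + |a|⁻¹) ^ (-(r₁ : ℝ)) * (1 + |b|) ^ (-(r₂ : ℝ))) := by
  classical
  set g : (Fin 2 → ℝ) → ℝ := fun ξ => (1 + ‖ξ‖) ^ (-(3:ℝ)) with hgdef
  have hgint : Integrable g := by
    apply integrable_one_add_norm (E := Fin 2 → ℝ)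
    rw [Module.finrank_fin_fun]
    norm_num
  set I : ℝ := ∫ ξ, g ξ with hIdef
  have hI0 : 0 ≤ I := integral_nonneg fun ξ => by positivity
  refine ⟨(4:ℝ) ^ r₂ * 2 ^ r₁ * (I + 1), by positivity, ?_⟩
  intro a b ha
  have ha0 : (0:ℝ) < |a| := abs_pos.2 ha
  set M := max |a| |a|⁻¹ with hMdef
  have hM1 : (1:ℝ) ≤ M := one_le_max ha
  have hM0 : (0:ℝ) < M := lt_of_lt_of_le one_pos hM1
  set s : ℕ := ⌈(1 + |c|) * r₂⌉₊ with hsdef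
  have hsge : (1 + |c|) * r₂ ≤ (s:ℝ) := Nat.le_ceil _
  have hslt : (s:ℝ) < (1 + |c|) * r₂ + 1 := Nat.ceil_lt_add_one (by positivity)
  have habsc : (0:ℝ) ≤ |c| := abs_nonneg c
  have hmt : r₁ + s + r₂ + 3 ≤ t := by
    have h : ((r₁ + s + r₂ + 3 : ℕ) : ℝ) ≤ t := by
      push_cast
      have hr1' : (1:ℝ) ≤ r₁ := by exact_mod_cast hr1
      have hr2' : (2:ℝ) ≤ r₂ := by exact_mod_cast hr2
      nlinarith
    exact_mod_cast h
  set k : ℕ := t - (r₁ + s + r₂) with hkdef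
  have htk : t = (r₁ + s) + r₂ + k := by omega
  have hk3 : 3 ≤ k := by omega
  set X : ℝ := |a| + |a|⁻¹ with hXdef
  have hX0 : (0:ℝ) < X := by positivity
  have hXM : X ≤ 2 * M := by
    rw [hXdef, two_mul]
    exact add_le_add (le_max_left _ _) (le_max_right _ _)
  set Y : ℝ := 1 + |b| with hYdef
  have hY0 : (0:ℝ) < Y := by positivity
  -- pointwise bound
  have hpt : ∀ ξ : Fin 2 → ℝ,
      shearA ξ ^ t * shearA ![a * ξ 0, b * ξ 0 + Real.sign a * |a| ^ c * ξ 1] ^ t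
        ≤ (4:ℝ) ^ r₂ * 2 ^ r₁ * X ^ (-(r₁ : ℝ)) * Y ^ (-(r₂ : ℝ)) * g ξ := by
    intro ξ
    set η : Fin 2 → ℝ := ![a * ξ 0, b * ξ 0 + Real.sign a * |a| ^ c * ξ 1] with hηdef
    have hu0 := shearA_nonneg ξ
    have hv0 := shearA_nonneg η
    have hv1 := shearA_le_one η
    have huv0 : 0 ≤ shearA ξ * shearA η := mul_nonneg hu0 hv0
    have hA : shearA ξ * shearA η ≤ M⁻¹ := prod_le_inv_max c ha b ξ
    have hB : shearA ξ * shearA η ≤ 4 * M ^ (1 + |c|) / Y :=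
      (le_div_iff₀ hY0).2 (prod_mul_le c ha b ξ)
    have hnorm : shearA ξ ≤ (1 + ‖ξ‖)⁻¹ := shearA_le_inv_norm ξ
    have hn0 : (0:ℝ) ≤ ‖ξ‖ := norm_nonneg ξ
    have h1 : (shearA ξ * shearA η) ^ (r₁ + s) ≤ (M⁻¹) ^ (r₁ + s) :=
      pow_le_pow_left₀ huv0 hA _
    have h2 : (shearA ξ * shearA η) ^ r₂ ≤ (4 * M ^ (1 + |c|) / Y) ^ r₂ :=
      pow_le_pow_left₀ huv0 hB _
    have h3 : (shearA ξ * shearA η) ^ k ≤ ((1 + ‖ξ‖)⁻¹) ^ 3 := by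
      have e1 : (shearA ξ * shearA η) ^ k ≤ shearA ξ ^ k := by
        rw [mul_pow]
        calc shearA ξ ^ k * shearA η ^ k ≤ shearA ξ ^ k * 1 :=
              mul_le_mul_of_nonneg_left (pow_le_one₀ hv0 hv1) (by positivity)
          _ = shearA ξ ^ k := mul_one _
      have e2 : shearA ξ ^ k ≤ ((1 + ‖ξ‖)⁻¹) ^ k := pow_le_pow_left₀ hu0 hnorm _
      have e3 : ((1 + ‖ξ‖)⁻¹) ^ k ≤ ((1 + ‖ξ‖)⁻¹) ^ 3 :=
        pow_le_pow_of_le_one (by positivity) (inv_le_one_of_one_le₀ (by linarith)) hk3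
      linarith
    have hsplit : shearA ξ ^ t * shearA η ^ t
        = (shearA ξ * shearA η) ^ (r₁ + s) * (shearA ξ * shearA η) ^ r₂
          * (shearA ξ * shearA η) ^ k := by
      rw [← mul_pow, htk, pow_add, pow_add]
    rw [hsplit]
    have hbig : (shearA ξ * shearA η) ^ (r₁ + s) * (shearA ξ * shearA η) ^ r₂
          * (shearA ξ * shearA η) ^ k
        ≤ (M⁻¹) ^ (r₁ + s) * (4 * M ^ (1 + |c|) / Y) ^ r₂ * ((1 + ‖ξ‖)⁻¹) ^ 3 := by
      have hb1 : (shearA ξ * shearA η) ^ (r₁ + s) * (shearA ξ * shearA η) ^ r₂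
          ≤ (M⁻¹) ^ (r₁ + s) * (4 * M ^ (1 + |c|) / Y) ^ r₂ :=
        mul_le_mul h1 h2 (by positivity) (by positivity)
      exact mul_le_mul hb1 h3 (by positivity) (by positivity)
    refine hbig.trans ?_
    -- now a purely algebraic estimate
    have hMc1 : (0:ℝ) < M ^ (1 + |c|) := Real.rpow_pos_of_pos hM0 _
    -- rewrite the rpow factors as inverses of powers
    have hXr : X ^ (-(r₁ : ℝ)) = (X ^ r₁)⁻¹ := by
      rw [Real.rpow_neg hX0.le, Real.rpow_natCast]
    have hYr : Y ^ (-(r₂ : ℝ)) = (Y ^ r₂)⁻¹ := by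
      rw [Real.rpow_neg hY0.le, Real.rpow_natCast]
    have hgξ : g ξ = ((1 + ‖ξ‖) ^ (3:ℕ))⁻¹ := by
      rw [hgdef]
      simp only
      rw [Real.rpow_neg (by linarith), ← Real.rpow_natCast (1 + ‖ξ‖) 3]
      norm_num
    rw [hXr, hYr, hgξ, ← inv_pow (1 + ‖ξ‖) 3]
    rw [div_pow, mul_pow]
    -- key power comparison : M⁻¹^(r₁+s) * (M^(1+|c|))^r₂ ≤ 2^r₁ * (X^r₁)⁻¹
    have hkey : (M⁻¹) ^ (r₁ + s) * (M ^ (1 + |c|)) ^ r₂ ≤ 2 ^ r₁ * (X ^ r₁)⁻¹ := by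
      have e1 : (M⁻¹ : ℝ) ^ (r₁ + s) = M ^ (-((r₁ + s : ℕ) : ℝ)) := by
        rw [Real.rpow_neg hM0.le, Real.rpow_natCast, inv_pow]
      have e2 : (M ^ (1 + |c|)) ^ r₂ = M ^ ((1 + |c|) * r₂) := by
        rw [← Real.rpow_natCast (M ^ (1 + |c|)) r₂, ← Real.rpow_mul hM0.le]
      rw [e1, e2, ← Real.rpow_add hM0]
      have e3 : M ^ (-((r₁ + s : ℕ) : ℝ) + (1 + |c|) * r₂) ≤ M ^ (-(r₁ : ℝ)) := by
        apply Real.rpow_le_rpow_of_exponent_le hM1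
        push_cast
        linarith
      refine e3.trans ?_
      rw [Real.rpow_neg hM0.le, Real.rpow_natCast]
      have hXpow : X ^ r₁ ≤ 2 ^ r₁ * M ^ r₁ := by
        calc X ^ r₁ ≤ (2 * M) ^ r₁ := pow_le_pow_left₀ hX0.le hXM _
          _ = 2 ^ r₁ * M ^ r₁ := mul_pow _ _ _
      rw [inv_eq_one_div, mul_comm ((2:ℝ) ^ r₁) _, inv_eq_one_div,
        div_mul_eq_mul_div, div_le_div_iff₀ (by positivity) (by positivity)]
      nlinarith [pow_pos hM0 r₁, pow_pos hX0 r₁]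
    calc (M⁻¹) ^ (r₁ + s) * ((4:ℝ) ^ r₂ * (M ^ (1 + |c|)) ^ r₂ / Y ^ r₂)
          * ((1 + ‖ξ‖)⁻¹) ^ 3
        = ((M⁻¹) ^ (r₁ + s) * (M ^ (1 + |c|)) ^ r₂) * ((4:ℝ) ^ r₂ * (Y ^ r₂)⁻¹
          * ((1 + ‖ξ‖)⁻¹) ^ 3) := by
          ring
      _ ≤ (2 ^ r₁ * (X ^ r₁)⁻¹) * ((4:ℝ) ^ r₂ * (Y ^ r₂)⁻¹
          * ((1 + ‖ξ‖)⁻¹) ^ 3) :=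
          mul_le_mul_of_nonneg_right hkey (by positivity)
      _ = (4:ℝ) ^ r₂ * 2 ^ r₁ * (X ^ r₁)⁻¹ * (Y ^ r₂)⁻¹ * ((1 + ‖ξ‖)⁻¹) ^ 3 := by
          ring
  -- integrate the pointwise bound
  set D : ℝ := (4:ℝ) ^ r₂ * 2 ^ r₁ * X ^ (-(r₁ : ℝ)) * Y ^ (-(r₂ : ℝ)) with hDdef
  have hD0 : 0 ≤ D := by positivity
  calc ∫⁻ ξ : Fin 2 → ℝ,
        ENNReal.ofReal (shearA ξ ^ t *
          shearA ![a * ξ 0, b * ξ 0 + Real.sign a * |a| ^ c * ξ 1] ^ t)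
      ≤ ∫⁻ ξ : Fin 2 → ℝ, ENNReal.ofReal D * ENNReal.ofReal (g ξ) := by
        apply lintegral_mono
        intro ξ
        dsimp only
        rw [← ENNReal.ofReal_mul hD0]
        exact ENNReal.ofReal_le_ofReal (hpt ξ)
    _ = ENNReal.ofReal D * ∫⁻ ξ : Fin 2 → ℝ, ENNReal.ofReal (g ξ) :=
        lintegral_const_mul' _ _ ENNReal.ofReal_ne_top
    _ = ENNReal.ofReal D * ENNReal.ofReal I := by
        rw [← ofReal_integral_eq_lintegral_ofReal hgint
          (ae_of_all _ fun ξ => by positivity)]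
    _ ≤ ENNReal.ofReal ((4:ℝ) ^ r₂ * 2 ^ r₁ * (I + 1) * (|a| + |a|⁻¹) ^ (-(r₁ : ℝ))
        * (1 + |b|) ^ (-(r₂ : ℝ))) := by
        rw [← ENNReal.ofReal_mul hD0]
        apply ENNReal.ofReal_le_ofReal
        have hXr0 : (0:ℝ) ≤ X ^ (-(r₁ : ℝ)) := Real.rpow_nonneg hX0.le _
        have hYr0 : (0:ℝ) ≤ Y ^ (-(r₂ : ℝ)) := Real.rpow_nonneg hY0.le _
        rw [hDdef, ← hXdef, ← hYdef]
        nlinarith [mul_nonneg (mul_nonneg (by positivity :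
          (0:ℝ) ≤ (4:ℝ) ^ r₂ * 2 ^ r₁) hXr0) hYr0]
end

section
/- Let (ψ_λ)_{λ∈Λ} be a frame in a Hilbert space ℋ with frame bounds, let 1 ≤ p < 2, and suppose f = Σ_λ c_λ ψ_λ with (c_λ) ∈ ℓ^p(Λ). Then there is a constant C (depending only on p and the frame bounds) with ( Σ_{n≥1} n^{-p/2} E_n(f)^p )^{1/p} ≤ C ‖(c_λ)‖_{ℓ^p}, where E_n(f) = inf{ ‖f − Σ_{λ∈Λ'} d_λ ψ_λ‖_ℋ : d_λ ∈ ℂ, |Λ'| ≤ n } is the n-term nonlinear approximation error. -/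
open scoped ComplexConjugate
open scoped ENNReal


open scoped ENNReal

namespace FrameAux

lemma tsum_rpow_le {ι : Type*} (f : ι → ℝ≥0∞) {q : ℝ} (hq0 : 0 < q) (hq1 : q ≤ 1) :
    (∑' i, f i) ^ q ≤ ∑' i, f i ^ q := by
  have hmono : Monotone fun x : ℝ≥0∞ => x ^ q := fun a b h => ENNReal.rpow_le_rpow h hq0.le
  rw [ENNReal.tsum_eq_iSup_sum (f := f),
    hmono.map_ciSup_of_continuousAt ENNReal.continuous_rpow_const.continuousAt]
  refine iSup_le fun s => ?_
  calc (∑ i ∈ s, f i) ^ q ≤ ∑ i ∈ s, f i ^ q := by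
        classical
        induction s using Finset.cons_induction with
        | empty => simp [ENNReal.zero_rpow_of_pos hq0]
        | cons i s hi ih =>
          rw [Finset.sum_cons, Finset.sum_cons]
          exact le_trans (ENNReal.rpow_add_le_add_rpow _ _ hq0.le hq1) (by gcongr)
    _ ≤ ∑' i, f i ^ q := ENNReal.sum_le_tsum s

lemma sum_Ico_blocks (w : ℕ → ℝ≥0∞) (g : ℕ → ℕ) (hg : Monotone g) (N : ℕ) :
    ∑ j ∈ Finset.range N, ∑ i ∈ Finset.Ico (g j) (g (j + 1)), w i
      = ∑ i ∈ Finset.Ico (g 0) (g N), w i := by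
  induction N with
  | zero => simp
  | succ N ih =>
    rw [Finset.sum_range_succ, ih,
      Finset.sum_Ico_consecutive _ (hg (Nat.zero_le N)) (hg (Nat.le_succ N))]

lemma tail_le_blocks {u : ℕ → ℝ≥0∞} (hu : Antitone u) (m : ℕ) (hm : 1 ≤ m) :
    (∑' k : ℕ, u (m + k)) ≤ ∑' j : ℕ, (m * 2 ^ j : ℕ) * u (m * 2 ^ j) := by
  rw [ENNReal.tsum_eq_iSup_nat]
  refine iSup_le fun N => ?_
  have h1 : ∑ k ∈ Finset.range N, u (m + k) = ∑ i ∈ Finset.Ico m (m + N), u i := by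
    rw [Finset.sum_Ico_eq_sum_range]; simp
  have hmN : m + N ≤ m * 2 ^ N := by
    calc m + N ≤ m + m * N := by nlinarith [Nat.one_le_iff_ne_zero.mp hm]
    _ = m * (N + 1) := by ring
    _ ≤ m * 2 ^ N := Nat.mul_le_mul_left m (Nat.lt_two_pow_self (n := N))
  calc ∑ k ∈ Finset.range N, u (m + k)
      ≤ ∑ i ∈ Finset.Ico m (m * 2 ^ N), u i := by
        rw [h1]
        exact Finset.sum_le_sum_of_subset (Finset.Ico_subset_Ico le_rfl hmN)
    _ = ∑ j ∈ Finset.range N, ∑ i ∈ Finset.Ico (m * 2 ^ j) (m * 2 ^ (j + 1)), u i := by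
        rw [sum_Ico_blocks u (fun j => m * 2 ^ j)
          (fun i j hij => Nat.mul_le_mul_left m (Nat.pow_le_pow_right (by norm_num) hij))]
        simp
    _ ≤ ∑ j ∈ Finset.range N, (m * 2 ^ j : ℕ) * u (m * 2 ^ j) := by
        refine Finset.sum_le_sum fun j _ => ?_
        have hcard : (Finset.Ico (m * 2 ^ j) (m * 2 ^ (j + 1))).card = m * 2 ^ j := by
          rw [Nat.card_Ico]
          exact Nat.sub_eq_of_eq_add (by ring)
        calc ∑ i ∈ Finset.Ico (m * 2 ^ j) (m * 2 ^ (j + 1)), u i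
            ≤ (Finset.Ico (m * 2 ^ j) (m * 2 ^ (j + 1))).card • u (m * 2 ^ j) := by
              refine Finset.sum_le_card_nsmul _ _ _ fun i hi => ?_
              exact hu (Finset.mem_Ico.mp hi).1
          _ = (m * 2 ^ j : ℕ) * u (m * 2 ^ j) := by rw [hcard, nsmul_eq_mul]
    _ ≤ ∑' j : ℕ, (m * 2 ^ j : ℕ) * u (m * 2 ^ j) := ENNReal.sum_le_tsum _

lemma spread_le {v : ℕ → ℝ≥0∞} (hv : Antitone v) (J : ℕ) :
    ∑' n : ℕ, (2 ^ J : ℕ) * v ((n + 1) * 2 ^ J) ≤ ∑' k, v k := by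
  rw [ENNReal.tsum_eq_iSup_nat]
  refine iSup_le fun N => ?_
  have key : ∀ n : ℕ, (2 ^ J : ℕ) * v ((n + 1) * 2 ^ J)
      ≤ ∑ i ∈ Finset.Ico (n * 2 ^ J + 1) ((n + 1) * 2 ^ J + 1), v i := by
    intro n
    have hcard : (Finset.Ico (n * 2 ^ J + 1) ((n + 1) * 2 ^ J + 1)).card = 2 ^ J := by
      rw [Nat.card_Ico]
      exact Nat.sub_eq_of_eq_add (by ring)
    calc ((2 ^ J : ℕ) : ℝ≥0∞) * v ((n + 1) * 2 ^ J)
        = (Finset.Ico (n * 2 ^ J + 1) ((n + 1) * 2 ^ J + 1)).card • v ((n + 1) * 2 ^ J) := by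
          rw [hcard, nsmul_eq_mul]
      _ ≤ ∑ i ∈ Finset.Ico (n * 2 ^ J + 1) ((n + 1) * 2 ^ J + 1), v i := by
          refine Finset.card_nsmul_le_sum _ _ _ fun i hi => ?_
          refine hv ?_
          have := (Finset.mem_Ico.mp hi).2
          omega
  calc ∑ n ∈ Finset.range N, (2 ^ J : ℕ) * v ((n + 1) * 2 ^ J)
      ≤ ∑ n ∈ Finset.range N, ∑ i ∈ Finset.Ico (n * 2 ^ J + 1) ((n + 1) * 2 ^ J + 1), v i :=
        Finset.sum_le_sum fun n _ => key n
    _ = ∑ i ∈ Finset.Ico (0 * 2 ^ J + 1) (N * 2 ^ J + 1), v i :=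
        sum_Ico_blocks v (fun n => n * 2 ^ J + 1)
          (fun i j hij => Nat.add_le_add_right (mul_le_mul_left hij _) 1) N
    _ ≤ ∑' k, v k := by
        refine le_trans (ENNReal.sum_le_tsum _) le_rfl

end FrameAux

namespace FrameAux

lemma main_seq {u : ℕ → ℝ≥0∞} (hu : Antitone u) {q : ℝ} (hq0 : 0 < q) (hq1 : q < 1) :
    ∑' n : ℕ, ((n : ℝ≥0∞) + 1) ^ (-q) * (∑' k : ℕ, u ((n + 1) + k)) ^ q
      ≤ (1 - 2 ^ (q - 1) : ℝ≥0∞)⁻¹ * ∑' k, u k ^ q := by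
  have h2 : ((2 : ℝ≥0∞)) ≠ 0 := by norm_num
  have h2t : ((2 : ℝ≥0∞)) ≠ ⊤ := by norm_num
  have step1 : ∀ n : ℕ, ((n : ℝ≥0∞) + 1) ^ (-q) * (∑' k : ℕ, u ((n + 1) + k)) ^ q
      ≤ ∑' j : ℕ, ((2 : ℝ≥0∞) ^ (q - 1)) ^ j * u ((n + 1) * 2 ^ j) ^ q * (2 : ℝ≥0∞) ^ j := by
    intro n
    have hm : (1 : ℕ) ≤ n + 1 := Nat.le_add_left 1 n
    have htail := tail_le_blocks hu (n + 1) hm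
    have h1 : (∑' k : ℕ, u ((n + 1) + k)) ^ q
        ≤ ∑' j : ℕ, (((n + 1) * 2 ^ j : ℕ) : ℝ≥0∞) ^ q * u ((n + 1) * 2 ^ j) ^ q := by
      refine le_trans (ENNReal.rpow_le_rpow htail hq0.le) ?_
      refine le_trans (tsum_rpow_le _ hq0 hq1.le) ?_
      refine ENNReal.tsum_le_tsum fun j => ?_
      rw [ENNReal.mul_rpow_of_nonneg _ _ hq0.le]
    calc ((n : ℝ≥0∞) + 1) ^ (-q) * (∑' k : ℕ, u ((n + 1) + k)) ^ q
        ≤ ((n : ℝ≥0∞) + 1) ^ (-q) *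
            ∑' j : ℕ, (((n + 1) * 2 ^ j : ℕ) : ℝ≥0∞) ^ q * u ((n + 1) * 2 ^ j) ^ q := by
          gcongr
      _ = ∑' j : ℕ, ((n : ℝ≥0∞) + 1) ^ (-q) *
            ((((n + 1) * 2 ^ j : ℕ) : ℝ≥0∞) ^ q * u ((n + 1) * 2 ^ j) ^ q) := by
          rw [ENNReal.tsum_mul_left]
      _ ≤ ∑' j : ℕ, ((2 : ℝ≥0∞) ^ (q - 1)) ^ j * u ((n + 1) * 2 ^ j) ^ q * (2 : ℝ≥0∞) ^ j := by
          refine ENNReal.tsum_le_tsum fun j => le_of_eq ?_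
          have hne : ((n : ℝ≥0∞) + 1) ≠ 0 := by simp
          have hnt : ((n : ℝ≥0∞) + 1) ≠ ⊤ :=
            ENNReal.add_ne_top.mpr ⟨ENNReal.natCast_ne_top n, ENNReal.one_ne_top⟩
          have hcast : (((n + 1) * 2 ^ j : ℕ) : ℝ≥0∞) = ((n : ℝ≥0∞) + 1) * (2 : ℝ≥0∞) ^ j := by
            push_cast; ring
          rw [hcast, ENNReal.mul_rpow_of_nonneg _ _ hq0.le, ← mul_assoc, ← mul_assoc]
          have hcancel : ((n : ℝ≥0∞) + 1) ^ (-q) * ((n : ℝ≥0∞) + 1) ^ q = 1 := by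
            rw [← ENNReal.rpow_add _ _ hne hnt]
            simp
          rw [hcancel, one_mul]
          have hpow : ((2 : ℝ≥0∞) ^ j) ^ q = ((2 : ℝ≥0∞) ^ (q - 1)) ^ j * (2 : ℝ≥0∞) ^ j := by
            rw [← ENNReal.rpow_natCast 2 j, ← ENNReal.rpow_mul, ← ENNReal.rpow_natCast (2 ^ (q - 1)) j,
              ← ENNReal.rpow_mul, ← ENNReal.rpow_add _ _ h2 h2t]
            ring_nf
          rw [hpow]; ring
  calc ∑' n : ℕ, ((n : ℝ≥0∞) + 1) ^ (-q) * (∑' k : ℕ, u ((n + 1) + k)) ^ q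
      ≤ ∑' n : ℕ, ∑' j : ℕ, ((2 : ℝ≥0∞) ^ (q - 1)) ^ j * u ((n + 1) * 2 ^ j) ^ q * (2 : ℝ≥0∞) ^ j :=
        ENNReal.tsum_le_tsum step1
    _ = ∑' j : ℕ, ((2 : ℝ≥0∞) ^ (q - 1)) ^ j * ∑' n : ℕ, u ((n + 1) * 2 ^ j) ^ q * (2 : ℝ≥0∞) ^ j := by
        rw [ENNReal.tsum_comm]
        congr 1
        funext j
        rw [← ENNReal.tsum_mul_left]
        congr 1; funext n; ring
    _ ≤ ∑' j : ℕ, ((2 : ℝ≥0∞) ^ (q - 1)) ^ j * ∑' k : ℕ, u k ^ q := by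
        refine ENNReal.tsum_le_tsum fun j => ?_
        refine mul_le_mul_right ?_ _
        have hv : Antitone fun k => u k ^ q := fun a b hab => ENNReal.rpow_le_rpow (hu hab) hq0.le
        have := spread_le hv j
        calc ∑' n : ℕ, u ((n + 1) * 2 ^ j) ^ q * (2 : ℝ≥0∞) ^ j
            = ∑' n : ℕ, ((2 ^ j : ℕ) : ℝ≥0∞) * (fun k => u k ^ q) ((n + 1) * 2 ^ j) := by
              congr 1; funext n; push_cast; ring
          _ ≤ ∑' k, u k ^ q := spread_le hv j
    _ = (1 - 2 ^ (q - 1) : ℝ≥0∞)⁻¹ * ∑' k, u k ^ q := by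
        rw [ENNReal.tsum_mul_right, ENNReal.tsum_geometric]

end FrameAux


namespace FrameAux
open scoped Classical

variable {Λ : Type}

open scoped Classical in
noncomputable def greedyF (a : Λ → ℝ) : ℕ → Finset Λ
  | 0 => ∅
  | m + 1 =>
    if h : ∃ l, l ∉ greedyF a m ∧ 0 < a l ∧ ∀ l' ∉ greedyF a m, a l' ≤ a l
    then insert h.choose (greedyF a m) else greedyF a m

open scoped Classical in
noncomputable def greedyR (a : Λ → ℝ) (m : ℕ) : ℝ :=
  if h : ∃ l, l ∉ greedyF a m ∧ 0 < a l ∧ ∀ l' ∉ greedyF a m, a l' ≤ a l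
  then a h.choose else 0

variable {a : Λ → ℝ}

lemma exists_argmax (ha : ∀ l, 0 ≤ a l) (hfin : ∀ ε : ℝ, 0 < ε → {l | ε ≤ a l}.Finite)
    (F : Finset Λ) (h : ∃ l, l ∉ F ∧ 0 < a l) :
    ∃ l, l ∉ F ∧ 0 < a l ∧ ∀ l' ∉ F, a l' ≤ a l := by
  classical
  obtain ⟨l₀, hl₀F, hl₀⟩ := h
  have hG : {l | a l₀ ≤ a l}.Finite := hfin (a l₀) hl₀
  have hl₀G : l₀ ∈ hG.toFinset \ F := by
    simp [Set.Finite.mem_toFinset, hl₀F]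
  obtain ⟨x, hx, hmax⟩ := Finset.exists_max_image (hG.toFinset \ F) a ⟨l₀, hl₀G⟩
  rw [Finset.mem_sdiff, Set.Finite.mem_toFinset] at hx
  refine ⟨x, hx.2, lt_of_lt_of_le hl₀ hx.1, fun l' hl' => ?_⟩
  by_cases hcase : a l₀ ≤ a l'
  · exact hmax l' (by rw [Finset.mem_sdiff, Set.Finite.mem_toFinset]; exact ⟨hcase, hl'⟩)
  · exact le_trans (le_of_not_ge hcase) hx.1

lemma greedyF_zero : greedyF a 0 = (∅ : Finset Λ) := rfl

lemma greedyF_subset_succ (m : ℕ) : greedyF a m ⊆ greedyF a (m + 1) := by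
  rw [greedyF]
  split
  · exact Finset.subset_insert _ _
  · exact Finset.Subset.refl _

lemma greedyF_mono : Monotone (greedyF a) :=
  monotone_nat_of_le_succ greedyF_subset_succ

lemma greedyF_card (m : ℕ) : (greedyF a m).card ≤ m := by
  induction m with
  | zero => simp [greedyF_zero]
  | succ m ih =>
    rw [greedyF]
    split
    · exact le_trans (Finset.card_insert_le _ _) (by omega)
    · omega

lemma greedyR_nonneg (ha : ∀ l, 0 ≤ a l) (m : ℕ) : 0 ≤ greedyR a m := by
  rw [greedyR]; split
  · exact ha _
  · exact le_rfl

lemma greedyR_max (ha : ∀ l, 0 ≤ a l) (hfin : ∀ ε : ℝ, 0 < ε → {l | ε ≤ a l}.Finite)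
    (m : ℕ) : ∀ l ∉ greedyF a m, a l ≤ greedyR a m := by
  intro l hl
  rw [greedyR]
  split
  · next h => exact h.choose_spec.2.2 l hl
  · next h =>
    rcases (ha l).eq_or_lt with he | hpos
    · exact le_of_eq he.symm
    · exact absurd (exists_argmax ha hfin _ ⟨l, hl, hpos⟩) h

lemma greedyR_antitone (ha : ∀ l, 0 ≤ a l) (hfin : ∀ ε : ℝ, 0 < ε → {l | ε ≤ a l}.Finite) :
    Antitone (greedyR a) := by
  refine antitone_nat_of_succ_le fun m => ?_
  conv_lhs => rw [greedyR]
  split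
  · next h =>
    have h1 : h.choose ∉ greedyF a m := fun hc => h.choose_spec.1 (greedyF_subset_succ m hc)
    exact greedyR_max ha hfin m _ h1
  · exact greedyR_nonneg ha m

lemma tail_succ (φ : ℝ → ℝ) (hφ0 : φ 0 = 0) (hφa : ∀ l, 0 ≤ φ (a l))
    (hb : Summable fun l => φ (a l)) (m : ℕ) :
    ∑' l, (if l ∈ greedyF a m then 0 else φ (a l))
      = φ (greedyR a m) + ∑' l, (if l ∈ greedyF a (m + 1) then 0 else φ (a l)) := by
  classical
  have hsum1 : ∀ (F : Finset Λ), Summable fun l => if l ∈ F then 0 else φ (a l) := by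
    intro F
    refine Summable.of_nonneg_of_le (fun l => ?_) (fun l => ?_) hb
    · split <;> [exact le_rfl; exact hφa _]
    · split <;> [exact hφa _; exact le_rfl]
  rw [greedyR, show greedyF a (m + 1) = if h : ∃ l, l ∉ greedyF a m ∧ 0 < a l ∧
      ∀ l' ∉ greedyF a m, a l' ≤ a l then insert h.choose (greedyF a m) else greedyF a m
    from rfl]
  split
  · next h =>
    set e := h.choose with he
    have heF : e ∉ greedyF a m := h.choose_spec.1
    have hfun : (fun l => if l ∈ greedyF a m then 0 else φ (a l))
        = fun l => (if l = e then φ (a e) else 0)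
          + (if l ∈ insert e (greedyF a m) then 0 else φ (a l)) := by
      funext l
      by_cases hle : l = e
      · subst hle
        simp [heF]
      · by_cases hlF : l ∈ greedyF a m <;>
          simp [hle, hlF, Finset.mem_insert]
    rw [hfun]
    rw [Summable.tsum_add ⟨φ (a e), hasSum_ite_eq e (φ (a e))⟩ (hsum1 _)]
    rw [tsum_ite_eq e (fun _ => φ (a e))]
  · next h =>
    rw [hφ0, zero_add]

lemma tail_Ico (φ : ℝ → ℝ) (hφ0 : φ 0 = 0) (hφa : ∀ l, 0 ≤ φ (a l))
    (hb : Summable fun l => φ (a l)) (m M : ℕ) (hmM : m ≤ M) :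
    ∑' l, (if l ∈ greedyF a m then 0 else φ (a l))
      = (∑ k ∈ Finset.Ico m M, φ (greedyR a k))
        + ∑' l, (if l ∈ greedyF a M then 0 else φ (a l)) := by
  induction M with
  | zero =>
    have : m = 0 := Nat.le_zero.mp hmM
    subst this; simp
  | succ M ih =>
    rcases Nat.lt_or_ge m (M + 1) with hm | hm
    · have hmM' : m ≤ M := by omega
      rw [Finset.sum_Ico_succ_top hmM', ih hmM', tail_succ φ hφ0 hφa hb M]
      ring
    · have : m = M + 1 := by omega
      subst this; simp

section Derived

variable {p : ℝ}

lemma finite_ge (hp0 : 0 < p) (hsump : Summable fun l => a l ^ p) :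
    ∀ ε : ℝ, 0 < ε → {l | ε ≤ a l}.Finite := by
  intro ε hε
  have h1 := hsump.tendsto_cofinite_zero
  have h2 : (fun l => a l ^ p) ⁻¹' (Set.Iio (ε ^ p)) ∈ Filter.cofinite :=
    h1 (Iio_mem_nhds (Real.rpow_pos_of_pos hε p))
  rw [Filter.mem_cofinite] at h2
  refine h2.subset fun l hl => ?_
  simp only [Set.mem_compl_iff, Set.mem_preimage, Set.mem_Iio, not_lt]
  exact Real.rpow_le_rpow hε.le hl hp0.le

lemma exists_bound (ha : ∀ l, 0 ≤ a l) (hp0 : 0 < p) (hsump : Summable fun l => a l ^ p) :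
    ∃ M : ℝ, 1 ≤ M ∧ ∀ l, a l ≤ M := by
  classical
  have hG := finite_ge (a := a) hp0 hsump 1 one_pos
  refine ⟨1 + ∑ l ∈ hG.toFinset, a l, le_add_of_nonneg_right
    (Finset.sum_nonneg fun l _ => ha l), fun l => ?_⟩
  by_cases hl : (1 : ℝ) ≤ a l
  · have hmem : l ∈ hG.toFinset := by rwa [Set.Finite.mem_toFinset]
    have := Finset.single_le_sum (f := a) (fun i _ => ha i) hmem
    linarith
  · push_neg at hl
    have : (0:ℝ) ≤ ∑ l ∈ hG.toFinset, a l := Finset.sum_nonneg fun i _ => ha i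
    linarith

lemma sq_summable_aux {ι : Type*} {g : ι → ℝ} {M : ℝ} (hg : ∀ i, 0 ≤ g i)
    (hgM : ∀ i, g i ≤ M) (hp1 : 0 < p) (hp2 : p ≤ 2)
    (hs : Summable fun i => g i ^ p) : Summable fun i => g i ^ 2 := by
  refine Summable.of_nonneg_of_le (fun i => sq_nonneg _) (fun i => ?_) (hs.mul_left (M ^ (2 - p)))
  rcases (hg i).eq_or_lt with he | hpos
  · rw [← he]
    rw [Real.zero_rpow hp1.ne']
    simp
  · have h1 : g i ^ 2 = g i ^ (2 - p) * g i ^ p := by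
      rw [← Real.rpow_add hpos, sub_add_cancel, ← Real.rpow_natCast (g i) 2]
      norm_num
    rw [h1]
    have hM0 : 0 ≤ M := le_trans (hg i) (hgM i)
    exact mul_le_mul_of_nonneg_right
      (Real.rpow_le_rpow (hg i) (hgM i) (by linarith)) (Real.rpow_nonneg (hg i) p)

lemma greedyR_le_bound {M : ℝ} (ha : ∀ l, 0 ≤ a l) (hM : 1 ≤ M) (haM : ∀ l, a l ≤ M)
    (m : ℕ) : greedyR a m ≤ M := by
  rw [greedyR]; split
  · exact haM _
  · linarith

lemma sum_range_rpow_le (ha : ∀ l, 0 ≤ a l) (hp0 : 0 < p)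
    (hsump : Summable fun l => a l ^ p) (N : ℕ) :
    ∑ k ∈ Finset.range N, greedyR a k ^ p ≤ ∑' l, a l ^ p := by
  have h := tail_Ico (a := a) (fun x => x ^ p) (Real.zero_rpow hp0.ne')
    (fun l => Real.rpow_nonneg (ha l) p) hsump 0 N (Nat.zero_le N)
  simp only [greedyF_zero, Finset.notMem_empty, if_false] at h
  rw [Finset.range_eq_Ico]
  have h2 : 0 ≤ ∑' l, (if l ∈ greedyF a N then 0 else a l ^ p) := by
    refine tsum_nonneg fun l => ?_
    split
    · exact le_rfl
    · exact Real.rpow_nonneg (ha l) p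
  linarith [h]

lemma summable_rpow_r (ha : ∀ l, 0 ≤ a l) (hp0 : 0 < p)
    (hsump : Summable fun l => a l ^ p) :
    Summable fun k => greedyR a k ^ p :=
  summable_of_sum_range_le (fun k => Real.rpow_nonneg (greedyR_nonneg ha k) p)
    (sum_range_rpow_le ha hp0 hsump)

lemma tsum_rpow_r_le (ha : ∀ l, 0 ≤ a l) (hp0 : 0 < p)
    (hsump : Summable fun l => a l ^ p) :
    ∑' k, greedyR a k ^ p ≤ ∑' l, a l ^ p :=
  Summable.tsum_le_of_sum_range_le (summable_rpow_r ha hp0 hsump)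
    (sum_range_rpow_le ha hp0 hsump)

lemma tendsto_r_zero (ha : ∀ l, 0 ≤ a l) (hp0 : 0 < p)
    (hsump : Summable fun l => a l ^ p) :
    Filter.Tendsto (greedyR a) Filter.atTop (nhds 0) := by
  have h1 := (summable_rpow_r ha hp0 hsump).tendsto_atTop_zero
  have h2 : Filter.Tendsto (fun k => (greedyR a k ^ p) ^ p⁻¹) Filter.atTop (nhds 0) := by
    have hc := (Real.continuous_rpow_const (le_of_lt (inv_pos.mpr hp0))).tendsto 0
    rw [Real.zero_rpow (inv_ne_zero hp0.ne')] at hc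
    exact hc.comp h1
  refine h2.congr fun k => ?_
  exact Real.rpow_rpow_inv (greedyR_nonneg ha k) hp0.ne'

lemma exists_mem_greedyF (ha : ∀ l, 0 ≤ a l) (hp0 : 0 < p)
    (hsump : Summable fun l => a l ^ p) {l : Λ} (hl : 0 < a l) :
    ∃ m, l ∈ greedyF a m := by
  by_contra hc
  push_neg at hc
  have h1 : ∀ m, a l ≤ greedyR a m := fun m =>
    greedyR_max ha (finite_ge hp0 hsump) m l (hc m)
  have := le_of_tendsto_of_tendsto' tendsto_const_nhds (tendsto_r_zero ha hp0 hsump) h1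
  linarith

lemma ite_sq_summable (hsum2 : Summable fun l => a l ^ 2) (H : Finset Λ) :
    Summable fun l => if l ∈ H then 0 else a l ^ 2 := by
  refine Summable.of_nonneg_of_le (fun l => ?_) (fun l => ?_) hsum2 <;> split
  · exact le_rfl
  · exact sq_nonneg _
  · exact sq_nonneg _
  · exact le_rfl

lemma tail2_eq_sub (hsum2 : Summable fun l => a l ^ 2) (H : Finset Λ) :
    ∑' l, (if l ∈ H then 0 else a l ^ 2) = (∑' l, a l ^ 2) - ∑ l ∈ H, a l ^ 2 := by
  classical
  have hfun : (fun l => a l ^ 2)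
      = fun l => (if l ∈ H then 0 else a l ^ 2) + (if l ∈ H then a l ^ 2 else 0) := by
    funext l; split <;> ring
  have hs2 : Summable fun l => if l ∈ H then a l ^ 2 else 0 :=
    summable_of_ne_finset_zero (s := H) (fun l hl => if_neg hl)
  have : (∑' l, a l ^ 2)
      = (∑' l, (if l ∈ H then 0 else a l ^ 2)) + ∑' l, (if l ∈ H then a l ^ 2 else 0) := by
    rw [← Summable.tsum_add (ite_sq_summable hsum2 H) hs2]
    exact tsum_congr fun l => by split <;> ring
  rw [this, tsum_eq_sum (s := H) (fun l hl => if_neg hl)]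
  rw [Finset.sum_congr rfl fun l hl => if_pos hl]
  ring

lemma tail2_small (ha : ∀ l, 0 ≤ a l) (hp0 : 0 < p)
    (hsump : Summable fun l => a l ^ p) (hsum2 : Summable fun l => a l ^ 2) :
    ∀ ε : ℝ, 0 < ε → ∃ M : ℕ, ∑' l, (if l ∈ greedyF a M then 0 else a l ^ 2) ≤ ε := by
  classical
  intro ε hε
  have hHS := hsum2.hasSum
  have hmem : Set.Ioi ((∑' l, a l ^ 2) - ε) ∈ nhds (∑' l, a l ^ 2) :=
    Ioi_mem_nhds (by linarith)
  obtain ⟨G, hG⟩ := (hHS.eventually hmem).exists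
  simp only [Set.mem_Ioi] at hG
  set Mfun : Λ → ℕ := fun l =>
    if h : 0 < a l then (exists_mem_greedyF ha hp0 hsump h).choose else 0 with hMfun
  refine ⟨G.sup Mfun, ?_⟩
  have hGF : ∀ l ∈ G, 0 < a l → l ∈ greedyF a (G.sup Mfun) := by
    intro l hl hpos
    have h1 : l ∈ greedyF a (Mfun l) := by
      rw [hMfun]; simp only [hpos, dif_pos]
      exact (exists_mem_greedyF ha hp0 hsump hpos).choose_spec
    exact greedyF_mono (Finset.le_sup hl) h1
  rw [tail2_eq_sub hsum2]
  have hsub : ∑ l ∈ G, a l ^ 2 ≤ ∑ l ∈ greedyF a (G.sup Mfun), a l ^ 2 := by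
    rw [← Finset.sum_filter_of_ne (p := fun l => 0 < a l)
      (fun l _ hne => by
        rcases (ha l).eq_or_lt with he | hpos
        · exact absurd (by rw [← he]; ring) hne
        · exact hpos)]
    refine Finset.sum_le_sum_of_subset_of_nonneg ?_ (fun l _ _ => sq_nonneg _)
    intro l hl
    rw [Finset.mem_filter] at hl
    exact hGF l hl.1 hl.2
  linarith

lemma tail2_le_tsum_r (ha : ∀ l, 0 ≤ a l) (hp0 : 0 < p) (hp2 : p ≤ 2)
    (hsump : Summable fun l => a l ^ p) (hsum2 : Summable fun l => a l ^ 2) (m : ℕ) :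
    ∑' l, (if l ∈ greedyF a m then 0 else a l ^ 2) ≤ ∑' k, greedyR a (m + k) ^ 2 := by
  obtain ⟨M, hM1, hMa⟩ := exists_bound ha hp0 hsump
  have hr2 : Summable fun k => greedyR a k ^ 2 :=
    sq_summable_aux (greedyR_nonneg ha) (greedyR_le_bound ha hM1 hMa) hp0 hp2
      (summable_rpow_r ha hp0 hsump)
  have hr2m : Summable fun k => greedyR a (m + k) ^ 2 :=
    ((summable_nat_add_iff m).mpr hr2).congr fun k => by rw [Nat.add_comm]
  refine le_of_forall_pos_le_add fun ε hε => ?_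
  obtain ⟨M₀, hM₀⟩ := tail2_small ha hp0 hsump hsum2 ε hε
  set N := max m M₀ with hN
  have hmN : m ≤ N := le_max_left _ _
  have htail_mono : ∑' l, (if l ∈ greedyF a N then 0 else a l ^ 2)
      ≤ ∑' l, (if l ∈ greedyF a M₀ then 0 else a l ^ 2) := by
    refine Summable.tsum_le_tsum (fun l => ?_) (ite_sq_summable hsum2 _) (ite_sq_summable hsum2 _)
    by_cases h0 : l ∈ greedyF a M₀
    · have : l ∈ greedyF a N := greedyF_mono (le_max_right _ _) h0
      simp [h0, this]
    · simp only [h0, if_false]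
      split
      · exact sq_nonneg _
      · exact le_rfl
  have hIco := tail_Ico (a := a) (fun x => x ^ 2) (by norm_num)
    (fun l => sq_nonneg _) hsum2 m N hmN
  have hsum_le : ∑ k ∈ Finset.Ico m N, greedyR a k ^ 2 ≤ ∑' k, greedyR a (m + k) ^ 2 := by
    rw [Finset.sum_Ico_eq_sum_range]
    exact Summable.sum_le_tsum _ (fun k _ => sq_nonneg _) hr2m
  have hfin : ∑' l, (if l ∈ greedyF a N then 0 else a l ^ 2) ≤ ε := le_trans htail_mono hM₀
  calc ∑' l, (if l ∈ greedyF a m then 0 else a l ^ 2)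
      = (∑ k ∈ Finset.Ico m N, greedyR a k ^ 2)
        + ∑' l, (if l ∈ greedyF a N then 0 else a l ^ 2) := hIco
    _ ≤ (∑' k, greedyR a (m + k) ^ 2) + ε := add_le_add hsum_le hfin

end Derived

end FrameAux


namespace FrameAux

lemma tsum_CS {ι : Type*} (A C : ι → ℝ) (hA : ∀ i, 0 ≤ A i) (hC : ∀ i, 0 ≤ C i)
    (h2A : Summable fun i => A i ^ 2) (h2C : Summable fun i => C i ^ 2) :
    ∑' i, A i * C i ≤ Real.sqrt (∑' i, A i ^ 2) * Real.sqrt (∑' i, C i ^ 2) := by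
  have hsAC : Summable fun i => A i * C i := by
    refine Summable.of_nonneg_of_le (fun i => mul_nonneg (hA i) (hC i)) (fun i => ?_)
      ((h2A.add h2C).mul_left (1 / 2))
    nlinarith [sq_nonneg (A i - C i)]
  refine Summable.tsum_le_of_sum_le hsAC fun s => ?_
  have h1 := Finset.sum_mul_sq_le_sq_mul_sq s A C
  have hnn : 0 ≤ ∑ i ∈ s, A i * C i :=
    Finset.sum_nonneg fun i _ => mul_nonneg (hA i) (hC i)
  have h2 : ∑ i ∈ s, A i * C i
      ≤ Real.sqrt ((∑ i ∈ s, A i ^ 2) * ∑ i ∈ s, C i ^ 2) := by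
    rw [← Real.sqrt_sq hnn]
    exact Real.sqrt_le_sqrt h1
  refine le_trans h2 ?_
  rw [Real.sqrt_mul (Finset.sum_nonneg fun i _ => sq_nonneg _)]
  have hA' : Real.sqrt (∑ i ∈ s, A i ^ 2) ≤ Real.sqrt (∑' i, A i ^ 2) :=
    Real.sqrt_le_sqrt (Summable.sum_le_tsum s (fun i _ => sq_nonneg _) h2A)
  have hC' : Real.sqrt (∑ i ∈ s, C i ^ 2) ≤ Real.sqrt (∑' i, C i ^ 2) :=
    Real.sqrt_le_sqrt (Summable.sum_le_tsum s (fun i _ => sq_nonneg _) h2C)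
  exact mul_le_mul hA' hC' (Real.sqrt_nonneg _) (Real.sqrt_nonneg _)

lemma synth_bound {ℋ : Type} [NormedAddCommGroup ℋ] [InnerProductSpace ℂ ℋ]
    {Λ : Type} (ψ : Λ → ℋ) (B : ℝ) (hB0 : 0 ≤ B)
    (hsq : ∀ g : ℋ, Summable fun l => ‖(inner ℂ g (ψ l) : ℂ)‖ ^ 2)
    (hB : ∀ g : ℋ, ∑' l, ‖(inner ℂ g (ψ l) : ℂ)‖ ^ 2 ≤ B * ‖g‖ ^ 2)
    (h : Λ → ℂ) (g : ℋ) (hs : HasSum (fun l => h l • ψ l) g)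
    (hh2 : Summable fun l => ‖h l‖ ^ 2) :
    ‖g‖ ≤ Real.sqrt B * Real.sqrt (∑' l, ‖h l‖ ^ 2) := by
  rcases eq_or_lt_of_le (norm_nonneg g) with hg | hg
  · rw [← hg]
    exact mul_nonneg (Real.sqrt_nonneg _) (Real.sqrt_nonneg _)
  have hS : HasSum (fun l => (inner ℂ g (h l • ψ l) : ℂ)) (inner ℂ g g) :=
    HasSum.mapL (innerSL ℂ g) hs
  have hS' : HasSum (fun l => h l * (inner ℂ g (ψ l) : ℂ)) (inner ℂ g g) := by
    refine hS.congr_fun fun l => ?_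
    rw [inner_smul_right]
  have hnormsum : Summable fun l => ‖h l * (inner ℂ g (ψ l) : ℂ)‖ := by
    refine Summable.of_nonneg_of_le (fun l => norm_nonneg _) (fun l => ?_)
      ((hh2.add (hsq g)).mul_left (1 / 2))
    rw [norm_mul]
    nlinarith [sq_nonneg (‖h l‖ - ‖(inner ℂ g (ψ l) : ℂ)‖), norm_nonneg (h l),
      norm_nonneg (inner ℂ g (ψ l) : ℂ)]
  have h1 : ‖g‖ ^ 2 ≤ ∑' l, ‖h l‖ * ‖(inner ℂ g (ψ l) : ℂ)‖ := by
    have h2 : ‖(inner ℂ g g : ℂ)‖ = ‖g‖ ^ 2 := by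
      rw [inner_self_eq_norm_sq_to_K]
      rw [norm_pow]
      norm_num
    rw [← h2, ← hS'.tsum_eq]
    refine le_trans (norm_tsum_le_tsum_norm hnormsum) ?_
    refine le_of_eq (tsum_congr fun l => ?_)
    rw [norm_mul]
  have h3 : ∑' l, ‖h l‖ * ‖(inner ℂ g (ψ l) : ℂ)‖
      ≤ Real.sqrt (∑' l, ‖h l‖ ^ 2) * Real.sqrt (∑' l, ‖(inner ℂ g (ψ l) : ℂ)‖ ^ 2) :=
    tsum_CS _ _ (fun l => norm_nonneg _) (fun l => norm_nonneg _) hh2 (hsq g)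
  have h4 : Real.sqrt (∑' l, ‖(inner ℂ g (ψ l) : ℂ)‖ ^ 2) ≤ Real.sqrt B * ‖g‖ := by
    have := Real.sqrt_le_sqrt (hB g)
    rwa [Real.sqrt_mul hB0, Real.sqrt_sq (norm_nonneg g)] at this
  have h5 : ‖g‖ * ‖g‖ ≤ (Real.sqrt B * Real.sqrt (∑' l, ‖h l‖ ^ 2)) * ‖g‖ := by
    have := le_trans h1 (le_trans h3 (by
      refine mul_le_mul_of_nonneg_left h4 (Real.sqrt_nonneg _)))
    calc ‖g‖ * ‖g‖ = ‖g‖ ^ 2 := (sq ‖g‖).symm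
      _ ≤ Real.sqrt (∑' l, ‖h l‖ ^ 2) * (Real.sqrt B * ‖g‖) := this
      _ = (Real.sqrt B * Real.sqrt (∑' l, ‖h l‖ ^ 2)) * ‖g‖ := by ring
  exact le_of_mul_le_mul_right h5 hg

end FrameAux


namespace FrameAux

lemma sqrt_pow_half {B p : ℝ} (hB0 : 0 ≤ B) : Real.sqrt B ^ p = B ^ (p / 2) := by
  rw [Real.sqrt_eq_rpow, ← Real.rpow_mul hB0, one_div, inv_mul_eq_div]

end FrameAux


open FrameAux in
/-- Nonlinear approximation with frames: if `(ψ_λ)` is a frame with bounds `A ≤ B` in a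
Hilbert space, `1 ≤ p < 2`, and `f = Σ c_λ ψ_λ` with `(c_λ) ∈ ℓ^p`, then
`(Σ_{n≥1} n^{-p/2} E_n(f)^p)^{1/p} ≤ C ‖(c_λ)‖_{ℓ^p}` with `C` depending only on `p`
and the frame bounds; here `E_n(f)` is the best `n`-term approximation error. -/
theorem frame_nonlinear_approximation (p A B : ℝ) (hp1 : 1 ≤ p) (hp2 : p < 2)
    (hA : 0 < A) (hAB : A ≤ B) :
    ∃ C > 0, ∀ (ℋ : Type) (_ : NormedAddCommGroup ℋ) (_ : InnerProductSpace ℂ ℋ)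
      (_ : CompleteSpace ℋ) (Λ : Type) (ψ : Λ → ℋ),
      (∀ g : ℋ, Summable fun l => ‖(inner ℂ g (ψ l) : ℂ)‖ ^ 2) →
      (∀ g : ℋ, A * ‖g‖ ^ 2 ≤ ∑' l, ‖(inner ℂ g (ψ l) : ℂ)‖ ^ 2) →
      (∀ g : ℋ, ∑' l, ‖(inner ℂ g (ψ l) : ℂ)‖ ^ 2 ≤ B * ‖g‖ ^ 2) →
      ∀ (f : ℋ) (cf : Λ → ℂ),
        HasSum (fun l => cf l • ψ l) f →
        Summable (fun l => ‖cf l‖ ^ p) →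
        (∑' n : ℕ, ((n : ℝ) + 1) ^ (-(p / 2)) *
            (sInf {e : ℝ | ∃ (F : Finset Λ) (dcoef : Λ → ℂ), F.card ≤ n + 1 ∧
              e = ‖f - ∑ l ∈ F, dcoef l • ψ l‖}) ^ p) ^ (1 / p)
          ≤ C * (∑' l, ‖cf l‖ ^ p) ^ (1 / p) := by
  classical
  have hp0 : 0 < p := lt_of_lt_of_le one_pos hp1
  have hB0 : 0 < B := lt_of_lt_of_le hA hAB
  have hq0 : 0 < p / 2 := by positivity
  have hq1 : p / 2 < 1 := by linarith
  have hc01 : (0:ℝ) < 2 ^ (p / 2 - 1) := Real.rpow_pos_of_pos (by norm_num) _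
  have hgeo : (0:ℝ) < 1 - 2 ^ (p / 2 - 1) := by
    have := Real.rpow_lt_one_of_one_lt_of_neg (by norm_num : (1:ℝ) < 2)
      (by linarith : p / 2 - 1 < 0)
    linarith
  have hKpos : 0 < B ^ (p / 2) * (1 - 2 ^ (p / 2 - 1))⁻¹ :=
    mul_pos (Real.rpow_pos_of_pos hB0 _) (inv_pos.mpr hgeo)
  refine ⟨(B ^ (p / 2) * (1 - 2 ^ (p / 2 - 1))⁻¹) ^ (1 / p),
    Real.rpow_pos_of_pos hKpos _, ?_⟩
  intro ℋ _ _ _ Λ ψ hsq hlow hupp f cf hf hcf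
  have ha : ∀ l, 0 ≤ ‖cf l‖ := fun l => norm_nonneg _
  have hsump : Summable fun l => ‖cf l‖ ^ p := hcf
  have hSnn : 0 ≤ ∑' l, ‖cf l‖ ^ p := tsum_nonneg fun l => Real.rpow_nonneg (ha l) p
  obtain ⟨M, hM1, hMa⟩ := exists_bound ha hp0 hsump
  have hsum2 : Summable fun l => ‖cf l‖ ^ 2 :=
    sq_summable_aux ha hMa hp0 (by linarith) hsump
  have hrnn : ∀ k, 0 ≤ greedyR (fun l => ‖cf l‖) k := greedyR_nonneg ha
  have hranti : Antitone (greedyR (fun l => ‖cf l‖)) :=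
    greedyR_antitone ha (finite_ge hp0 hsump)
  have hr2 : Summable fun k => greedyR (fun l => ‖cf l‖) k ^ 2 :=
    sq_summable_aux hrnn (greedyR_le_bound ha hM1 hMa) hp0 (by linarith)
      (summable_rpow_r ha hp0 hsump)
  have hr2m : ∀ m : ℕ, Summable fun k => greedyR (fun l => ‖cf l‖) (m + k) ^ 2 := fun m =>
    ((summable_nat_add_iff m).mpr hr2).congr fun k => by rw [Nat.add_comm]
  have hEset : ∀ n : ℕ, ∀ e ∈ {e : ℝ | ∃ (F : Finset Λ) (dcoef : Λ → ℂ), F.card ≤ n + 1 ∧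
      e = ‖f - ∑ l ∈ F, dcoef l • ψ l‖}, 0 ≤ e := by
    rintro n e ⟨F, d, _, rfl⟩
    exact norm_nonneg _
  have hEnn : ∀ n : ℕ, 0 ≤ sInf {e : ℝ | ∃ (F : Finset Λ) (dcoef : Λ → ℂ), F.card ≤ n + 1 ∧
      e = ‖f - ∑ l ∈ F, dcoef l • ψ l‖} := fun n => Real.sInf_nonneg (hEset n)
  have hτnn : ∀ m : ℕ,
      0 ≤ ∑' l, (if l ∈ greedyF (fun l => ‖cf l‖) m then 0 else ‖cf l‖ ^ 2) :=
    fun m => tsum_nonneg fun l => by split <;> [exact le_rfl; exact sq_nonneg _]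
  have hsplit : ∀ F : Finset Λ, HasSum (fun l => (if l ∈ F then 0 else cf l) • ψ l)
      (f - ∑ l ∈ F, cf l • ψ l) := by
    intro F
    have h2 : HasSum (fun l => if l ∈ F then cf l • ψ l else 0) (∑ l ∈ F, cf l • ψ l) := by
      have h2' := hasSum_sum_of_ne_finset_zero
        (f := fun l => if l ∈ F then cf l • ψ l else 0) (s := F) (L := SummationFilter.unconditional Λ) (fun l hl => if_neg hl)
      rwa [Finset.sum_congr rfl (fun l hl => if_pos hl)] at h2'
    refine (hf.sub h2).congr_fun fun l => ?_
    by_cases hl : l ∈ F <;> simp [hl]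
  have hEle : ∀ n : ℕ, sInf {e : ℝ | ∃ (F : Finset Λ) (dcoef : Λ → ℂ), F.card ≤ n + 1 ∧
        e = ‖f - ∑ l ∈ F, dcoef l • ψ l‖}
      ≤ Real.sqrt B * Real.sqrt
          (∑' l, (if l ∈ greedyF (fun l => ‖cf l‖) (n + 1) then 0 else ‖cf l‖ ^ 2)) := by
    intro n
    have hmem : ‖f - ∑ l ∈ greedyF (fun l => ‖cf l‖) (n + 1), cf l • ψ l‖
        ∈ {e : ℝ | ∃ (F : Finset Λ) (dcoef : Λ → ℂ),
          F.card ≤ n + 1 ∧ e = ‖f - ∑ l ∈ F, dcoef l • ψ l‖} :=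
      ⟨greedyF (fun l => ‖cf l‖) (n + 1), cf, greedyF_card (n + 1), rfl⟩
    refine le_trans (csInf_le ⟨0, hEset n⟩ hmem) ?_
    have hh2 : Summable fun l =>
        ‖(if l ∈ greedyF (fun l => ‖cf l‖) (n + 1) then 0 else cf l)‖ ^ 2 := by
      refine (ite_sq_summable hsum2 (greedyF (fun l => ‖cf l‖) (n + 1))).congr fun l => ?_
      beta_reduce
      by_cases hl : l ∈ greedyF (fun l => ‖cf l‖) (n + 1)
      · rw [if_pos hl, if_pos hl, norm_zero]
        norm_num
      · rw [if_neg hl, if_neg hl]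
    have hbd := synth_bound ψ B hB0.le hsq hupp
      (fun l => if l ∈ greedyF (fun l => ‖cf l‖) (n + 1) then 0 else cf l)
      (f - ∑ l ∈ greedyF (fun l => ‖cf l‖) (n + 1), cf l • ψ l)
      (hsplit (greedyF (fun l => ‖cf l‖) (n + 1))) hh2
    refine le_trans hbd (le_of_eq ?_)
    congr 2
    refine tsum_congr fun l => ?_
    beta_reduce
    by_cases hl : l ∈ greedyF (fun l => ‖cf l‖) (n + 1)
    · rw [if_pos hl, if_pos hl, norm_zero]
      norm_num
    · rw [if_neg hl, if_neg hl]
  have hτle : ∀ n : ℕ,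
      (∑' l, (if l ∈ greedyF (fun l => ‖cf l‖) (n + 1) then 0 else ‖cf l‖ ^ 2))
      ≤ ∑' k, greedyR (fun l => ‖cf l‖) ((n + 1) + k) ^ 2 := fun n =>
    tail2_le_tsum_r ha hp0 (by linarith) hsump hsum2 (n + 1)
  have hWnn : ∀ n : ℕ, 0 ≤ ((n : ℝ) + 1) ^ (-(p / 2)) *
      (sInf {e : ℝ | ∃ (F : Finset Λ) (dcoef : Λ → ℂ), F.card ≤ n + 1 ∧
        e = ‖f - ∑ l ∈ F, dcoef l • ψ l‖}) ^ p := fun n =>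
    mul_nonneg (Real.rpow_nonneg (by positivity) _) (Real.rpow_nonneg (hEnn n) p)
  -- termwise bound in ℝ≥0∞
  have hkey : ∀ n : ℕ, ENNReal.ofReal (((n : ℝ) + 1) ^ (-(p / 2)) *
      (sInf {e : ℝ | ∃ (F : Finset Λ) (dcoef : Λ → ℂ), F.card ≤ n + 1 ∧
        e = ‖f - ∑ l ∈ F, dcoef l • ψ l‖}) ^ p)
      ≤ ENNReal.ofReal (B ^ (p / 2)) * (((n : ℝ≥0∞) + 1) ^ (-(p / 2)) *
        (∑' k : ℕ, ENNReal.ofReal (greedyR (fun l => ‖cf l‖) ((n + 1) + k) ^ 2)) ^ (p / 2)) := by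
    intro n
    have hTnn : 0 ≤ ∑' k, greedyR (fun l => ‖cf l‖) ((n + 1) + k) ^ 2 :=
      tsum_nonneg fun k => sq_nonneg _
    have hwnn : (0:ℝ) ≤ ((n : ℝ) + 1) ^ (-(p / 2)) := Real.rpow_nonneg (by positivity) _
    have hreal : ((n : ℝ) + 1) ^ (-(p / 2)) *
        (sInf {e : ℝ | ∃ (F : Finset Λ) (dcoef : Λ → ℂ), F.card ≤ n + 1 ∧
          e = ‖f - ∑ l ∈ F, dcoef l • ψ l‖}) ^ p
        ≤ ((n : ℝ) + 1) ^ (-(p / 2)) * (B ^ (p / 2) *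
          (∑' k, greedyR (fun l => ‖cf l‖) ((n + 1) + k) ^ 2) ^ (p / 2)) := by
      refine mul_le_mul_of_nonneg_left ?_ hwnn
      have h1 : (sInf {e : ℝ | ∃ (F : Finset Λ) (dcoef : Λ → ℂ), F.card ≤ n + 1 ∧
          e = ‖f - ∑ l ∈ F, dcoef l • ψ l‖}) ^ p
          ≤ (Real.sqrt B * Real.sqrt
            (∑' l, (if l ∈ greedyF (fun l => ‖cf l‖) (n + 1) then 0 else ‖cf l‖ ^ 2))) ^ p :=
        Real.rpow_le_rpow (hEnn n) (hEle n) hp0.le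
      refine le_trans h1 ?_
      rw [Real.mul_rpow (Real.sqrt_nonneg _) (Real.sqrt_nonneg _), sqrt_pow_half hB0.le,
        sqrt_pow_half (hτnn (n + 1))]
      refine mul_le_mul_of_nonneg_left ?_ (Real.rpow_nonneg hB0.le _)
      exact Real.rpow_le_rpow (hτnn (n + 1)) (hτle n) hq0.le
    refine le_trans (ENNReal.ofReal_le_ofReal hreal) (le_of_eq ?_)
    rw [ENNReal.ofReal_mul hwnn, ENNReal.ofReal_mul (Real.rpow_nonneg hB0.le _),
      ← ENNReal.ofReal_rpow_of_nonneg hTnn hq0.le,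
      ENNReal.ofReal_tsum_of_nonneg (fun k => sq_nonneg _) (hr2m (n + 1)),
      ← ENNReal.ofReal_rpow_of_pos (by positivity : (0:ℝ) < (n : ℝ) + 1)]
    have hcast : ENNReal.ofReal ((n : ℝ) + 1) = ((n : ℝ≥0∞) + 1) := by
      rw [ENNReal.ofReal_add (Nat.cast_nonneg n) zero_le_one, ENNReal.ofReal_natCast,
        ENNReal.ofReal_one]
    rw [hcast]
    ring
  -- sum the key bound
  have hu : Antitone fun k => ENNReal.ofReal (greedyR (fun l => ‖cf l‖) k ^ 2) := by
    intro i j hij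
    exact ENNReal.ofReal_le_ofReal (pow_le_pow_left₀ (hrnn j) (hranti hij) 2)
  have hsum_e : (∑' n : ℕ, ENNReal.ofReal (((n : ℝ) + 1) ^ (-(p / 2)) *
      (sInf {e : ℝ | ∃ (F : Finset Λ) (dcoef : Λ → ℂ), F.card ≤ n + 1 ∧
        e = ‖f - ∑ l ∈ F, dcoef l • ψ l‖}) ^ p))
      ≤ ENNReal.ofReal (B ^ (p / 2) * (1 - 2 ^ (p / 2 - 1))⁻¹ * ∑' l, ‖cf l‖ ^ p) := by
    have hmain := main_seq hu hq0 hq1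
    calc ∑' n : ℕ, ENNReal.ofReal (((n : ℝ) + 1) ^ (-(p / 2)) *
        (sInf {e : ℝ | ∃ (F : Finset Λ) (dcoef : Λ → ℂ), F.card ≤ n + 1 ∧
          e = ‖f - ∑ l ∈ F, dcoef l • ψ l‖}) ^ p)
        ≤ ∑' n : ℕ, ENNReal.ofReal (B ^ (p / 2)) * (((n : ℝ≥0∞) + 1) ^ (-(p / 2)) *
          (∑' k : ℕ, ENNReal.ofReal (greedyR (fun l => ‖cf l‖) ((n + 1) + k) ^ 2)) ^ (p / 2)) :=
          ENNReal.tsum_le_tsum hkey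
      _ = ENNReal.ofReal (B ^ (p / 2)) * ∑' n : ℕ, (((n : ℝ≥0∞) + 1) ^ (-(p / 2)) *
          (∑' k : ℕ, ENNReal.ofReal (greedyR (fun l => ‖cf l‖) ((n + 1) + k) ^ 2)) ^ (p / 2)) :=
          ENNReal.tsum_mul_left
      _ ≤ ENNReal.ofReal (B ^ (p / 2)) * ((1 - 2 ^ (p / 2 - 1))⁻¹ *
          ∑' k, ENNReal.ofReal (greedyR (fun l => ‖cf l‖) k ^ 2) ^ (p / 2)) :=
          mul_le_mul_right hmain _
      _ = ENNReal.ofReal (B ^ (p / 2)) * ((1 - 2 ^ (p / 2 - 1))⁻¹ *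
          ∑' k, ENNReal.ofReal (greedyR (fun l => ‖cf l‖) k ^ p)) := by
          congr 2
          refine tsum_congr fun k => ?_
          rw [ENNReal.ofReal_rpow_of_nonneg (sq_nonneg _) hq0.le]
          congr 1
          rw [← Real.rpow_natCast (greedyR (fun l => ‖cf l‖) k) 2, ← Real.rpow_mul (hrnn k)]
          norm_num
          congr 1
          ring
      _ ≤ ENNReal.ofReal (B ^ (p / 2)) * ((1 - 2 ^ (p / 2 - 1))⁻¹ *
          ENNReal.ofReal (∑' l, ‖cf l‖ ^ p)) := by
          refine mul_le_mul_right (mul_le_mul_right ?_ _) _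
          rw [← ENNReal.ofReal_tsum_of_nonneg
            (fun k => Real.rpow_nonneg (hrnn k) p) (summable_rpow_r ha hp0 hsump)]
          exact ENNReal.ofReal_le_ofReal (tsum_rpow_r_le ha hp0 hsump)
      _ = ENNReal.ofReal (B ^ (p / 2) * (1 - 2 ^ (p / 2 - 1))⁻¹ * ∑' l, ‖cf l‖ ^ p) := by
          have h2e : ((2:ℝ≥0∞) ^ (p / 2 - 1)) = ENNReal.ofReal ((2:ℝ) ^ (p / 2 - 1)) := by
            rw [← ENNReal.ofReal_rpow_of_pos (by norm_num : (0:ℝ) < 2)]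
            norm_num
          have hinv : ((1:ℝ≥0∞) - 2 ^ (p / 2 - 1))⁻¹
              = ENNReal.ofReal ((1 - 2 ^ (p / 2 - 1) : ℝ)⁻¹) := by
            rw [ENNReal.ofReal_inv_of_pos hgeo, ENNReal.ofReal_sub _ hc01.le,
              ENNReal.ofReal_one, h2e]
          rw [hinv, ← ENNReal.ofReal_mul (inv_nonneg.mpr hgeo.le),
            ← ENNReal.ofReal_mul (Real.rpow_nonneg hB0.le _)]
          congr 1
          ring
  have hofne : (∑' n : ℕ, ENNReal.ofReal (((n : ℝ) + 1) ^ (-(p / 2)) *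
      (sInf {e : ℝ | ∃ (F : Finset Λ) (dcoef : Λ → ℂ), F.card ≤ n + 1 ∧
        e = ‖f - ∑ l ∈ F, dcoef l • ψ l‖}) ^ p)) ≠ ⊤ :=
    ne_top_of_le_ne_top ENNReal.ofReal_ne_top hsum_e
  have hWle : (∑' n : ℕ, ((n : ℝ) + 1) ^ (-(p / 2)) *
      (sInf {e : ℝ | ∃ (F : Finset Λ) (dcoef : Λ → ℂ), F.card ≤ n + 1 ∧
        e = ‖f - ∑ l ∈ F, dcoef l • ψ l‖}) ^ p)
      ≤ B ^ (p / 2) * (1 - 2 ^ (p / 2 - 1))⁻¹ * ∑' l, ‖cf l‖ ^ p := by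
    have h1 : (∑' n : ℕ, ((n : ℝ) + 1) ^ (-(p / 2)) *
        (sInf {e : ℝ | ∃ (F : Finset Λ) (dcoef : Λ → ℂ), F.card ≤ n + 1 ∧
          e = ‖f - ∑ l ∈ F, dcoef l • ψ l‖}) ^ p)
        = (∑' n : ℕ, ENNReal.ofReal (((n : ℝ) + 1) ^ (-(p / 2)) *
          (sInf {e : ℝ | ∃ (F : Finset Λ) (dcoef : Λ → ℂ), F.card ≤ n + 1 ∧
            e = ‖f - ∑ l ∈ F, dcoef l • ψ l‖}) ^ p)).toReal := by
      rw [ENNReal.tsum_toReal_eq (fun n => ENNReal.ofReal_ne_top)]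
      exact tsum_congr fun n => (ENNReal.toReal_ofReal (hWnn n)).symm
    rw [h1]
    refine le_trans (ENNReal.toReal_mono ENNReal.ofReal_ne_top hsum_e) ?_
    rw [ENNReal.toReal_ofReal (mul_nonneg hKpos.le hSnn)]
  calc (∑' n : ℕ, ((n : ℝ) + 1) ^ (-(p / 2)) *
      (sInf {e : ℝ | ∃ (F : Finset Λ) (dcoef : Λ → ℂ), F.card ≤ n + 1 ∧
        e = ‖f - ∑ l ∈ F, dcoef l • ψ l‖}) ^ p) ^ (1 / p)
      ≤ (B ^ (p / 2) * (1 - 2 ^ (p / 2 - 1))⁻¹ * ∑' l, ‖cf l‖ ^ p) ^ (1 / p) :=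
        Real.rpow_le_rpow (tsum_nonneg hWnn) hWle (by positivity)
    _ = (B ^ (p / 2) * (1 - 2 ^ (p / 2 - 1))⁻¹) ^ (1 / p) * (∑' l, ‖cf l‖ ^ p) ^ (1 / p) :=
        Real.mul_rpow hKpos.le hSnn
end
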